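/- arXiv:2109.04860 — 5 statements merged into one kernel-verified Lean document; each statement's English description precedes it below -/
import Mathlib

section
/- Let 0 < α < β. There exist γ ∈ (0,1) (sufficiently close to 1, depending only on α, β and the doubling constant c₃ of μ) and c > 0 (depending only on α, β, γ, c₃) such that for every closed set E ⊂ ∂Ω the following holds: if E* denotes the set of points of global γ-density of E, i.e. E* := {x ∈ ∂Ω : μ(E ∩ Δ(x,r)) ≥ γ μ(Δ(x,r)) for all r > 0}, then for every Y ∈ 𝓡_β(E*) := ⋃_{x∈E*} Γ^β(x) one has μ( E ∩ B(Y, (1+α) δ(Y)) ∩ ∂Ω ) ≥ c · μ(Δ(ŷ(Y), δ(Y))). -/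
open Metric MeasureTheory Set
open scoped ENNReal

noncomputable section

/-- Distance to the boundary of `Ω`. -/
def bdist {n : ℕ} (Ω : Set (EuclideanSpace ℝ (Fin (n + 1))))
    (X : EuclideanSpace ℝ (Fin (n + 1))) : ℝ :=
  Metric.infDist X (frontier Ω)

/-- The cone `Γ^α(x)` with vertex `x` and aperture `α`. -/
def cone {n : ℕ} (Ω : Set (EuclideanSpace ℝ (Fin (n + 1)))) (α : ℝ)
    (x : EuclideanSpace ℝ (Fin (n + 1))) : Set (EuclideanSpace ℝ (Fin (n + 1))) :=
  {Y | Y ∈ Ω ∧ dist Y x < (1 + α) * bdist Ω Y}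

/-- Iterated doubling property. -/
lemma doubling_iter {X : Type*} [PseudoMetricSpace X] [MeasurableSpace X]
    (μ : Measure X) (F : Set X) (c₃ : ℝ≥0∞) (p : X)
    (h : ∀ r : ℝ, 0 < r → μ (ball p (2 * r) ∩ F) ≤ c₃ * μ (ball p r ∩ F)) :
    ∀ (k : ℕ) (r : ℝ), 0 < r → μ (ball p (2 ^ k * r) ∩ F) ≤ c₃ ^ k * μ (ball p r ∩ F) := by
  intro k
  induction k with
  | zero => intro r hr; simp
  | succ k ih =>
    intro r hr
    have h1 : (2:ℝ) ^ (k+1) * r = 2 * (2 ^ k * r) := by ring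
    rw [h1]
    calc μ (ball p (2 * (2 ^ k * r)) ∩ F) ≤ c₃ * μ (ball p (2 ^ k * r) ∩ F) :=
          h _ (by positivity)
      _ ≤ c₃ * (c₃ ^ k * μ (ball p r ∩ F)) := mul_le_mul_right (ih r hr) c₃
      _ = c₃ ^ (k+1) * μ (ball p r ∩ F) := by rw [pow_succ]; ring

/-- for `γ` close enough to 1 (depending only on `α < β` and the doubling
constant `c₃`), if `E*` is the set of points of global `γ`-density of a closed set
`E ⊆ ∂Ω`, then for every `Y` in the sawtooth region `𝓡_β(E*)` the set `E` has
substantial measure in `B(Y, (1+α)δ(Y)) ∩ ∂Ω`: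
`μ(E ∩ B(Y,(1+α)δ(Y)) ∩ ∂Ω) ≥ c μ(Δ(yh(Y), δ(Y)))`. -/
theorem statement1 (α β : ℝ) (hα : 0 < α) (hαβ : α < β)
    (c₃ : ℝ≥0∞) (hc₃ : 1 < c₃) (hc₃' : c₃ < ∞) :
    ∃ γ : ℝ≥0∞, 0 < γ ∧ γ < 1 ∧ ∃ c : ℝ≥0∞, 0 < c ∧
      ∀ (n : ℕ) (Ω : Set (EuclideanSpace ℝ (Fin (n + 1)))),
        IsOpen Ω → Ω.Nonempty → (frontier Ω).Nonempty →
        ∀ μ : Measure (EuclideanSpace ℝ (Fin (n + 1))),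
          -- μ is a doubling measure on ∂Ω with constant c₃
          (∀ x ∈ frontier Ω, ∀ r : ℝ, 0 < r →
            0 < μ (ball x r ∩ frontier Ω) ∧ μ (ball x r ∩ frontier Ω) < ∞ ∧
              μ (ball x (2 * r) ∩ frontier Ω) ≤ c₃ * μ (ball x r ∩ frontier Ω)) →
          -- yh is a measurable nearest boundary point map
          ∀ yhat : EuclideanSpace ℝ (Fin (n + 1)) → EuclideanSpace ℝ (Fin (n + 1)),
            Measurable yhat →
            (∀ Y ∈ Ω, yhat Y ∈ frontier Ω ∧ dist Y (yhat Y) = bdist Ω Y) →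
            ∀ E : Set (EuclideanSpace ℝ (Fin (n + 1))),
              IsClosed E → E ⊆ frontier Ω →
              -- for every Y in 𝓡_β(E*), where E* is the set of points of global
              -- γ-density with respect to E
              ∀ Y ∈ ⋃ x ∈ {x ∈ frontier Ω | ∀ r : ℝ, 0 < r →
                      γ * μ (ball x r ∩ frontier Ω) ≤ μ (E ∩ (ball x r ∩ frontier Ω))},
                    cone Ω β x,
                c * μ (ball (yhat Y) (bdist Ω Y) ∩ frontier Ω) ≤
                  μ (E ∩ ball Y ((1 + α) * bdist Ω Y) ∩ frontier Ω) := by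
  -- choose k with (4 + 2β + α)/α < 2^k
  obtain ⟨k, hk⟩ : ∃ k : ℕ, (4 + 2*β + α) / α < (2:ℝ) ^ k :=
    pow_unbounded_of_one_lt _ one_lt_two
  have hc₃0 : c₃ ≠ 0 := (zero_lt_one.trans hc₃).ne'
  have hpow0 : c₃ ^ k ≠ 0 := pow_ne_zero k hc₃0
  have hpowtop : c₃ ^ k ≠ ∞ := (ENNReal.pow_lt_top hc₃').ne
  set ε : ℝ≥0∞ := (2 * c₃ ^ k)⁻¹ with hεdef
  have hεpos : 0 < ε := ENNReal.inv_pos.mpr (ENNReal.mul_ne_top (by norm_num) hpowtop)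
  have hεlt1 : ε < 1 := by
    rw [hεdef, ENNReal.inv_lt_one]
    exact lt_of_lt_of_le ENNReal.one_lt_two
      (le_mul_of_one_le_right' (one_le_pow_of_one_le' hc₃.le k))
  have hεc : ε * c₃ ^ k = 2⁻¹ := by
    rw [hεdef, ENNReal.mul_inv (Or.inl (by norm_num)) (Or.inl (by norm_num)),
      mul_assoc, ENNReal.inv_mul_cancel hpow0 hpowtop, mul_one]
  refine ⟨1 - ε, tsub_pos_of_lt hεlt1, ENNReal.sub_lt_self ENNReal.one_ne_top one_ne_zero hεpos.ne', ε,
    hεpos, ?_⟩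
  intro n Ω hΩo hΩne hFne μ hdoub yhat _ hyhat E _ _ Y hY
  simp only [mem_iUnion, mem_setOf_eq, cone] at hY
  obtain ⟨x, ⟨hxF, hxdens⟩, hYΩ, hYx⟩ := hY
  set F := frontier Ω
  set δ := bdist Ω Y with hδdef
  have hYnF : Y ∉ F := by
    rw [show F = frontier Ω from rfl, hΩo.frontier_eq]
    exact fun h => h.2 hYΩ
  have hδ : 0 < δ := (isClosed_frontier.notMem_iff_infDist_pos hFne).mp hYnF
  obtain ⟨hyhF, hYyh⟩ := hyhat Y hYΩ
  set yh := yhat Y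
  -- key geometric facts
  have hxyh : dist x yh < (2 + β) * δ := by
    have h1 : dist x yh ≤ dist x Y + dist Y yh := dist_triangle _ _ _
    rw [dist_comm x Y] at h1
    nlinarith [hYyh, hYx]
  set S := ball yh (α * δ) ∩ F with hSdef
  set A := ball x ((2 + β + α) * δ) ∩ F with hAdef
  set B := ball Y ((1 + α) * δ) with hBdef
  have hSB : S ⊆ B := by
    rintro z ⟨hz, -⟩
    rw [hBdef, mem_ball]
    calc dist z Y ≤ dist z yh + dist yh Y := dist_triangle _ _ _
      _ < α * δ + δ := by
          have := mem_ball.mp hz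
          rw [dist_comm yh Y]
          linarith [hYyh]
      _ = (1 + α) * δ := by ring
  have hSA : S ⊆ A := by
    rintro z ⟨hz, hzF⟩
    refine ⟨mem_ball.mpr ?_, hzF⟩
    calc dist z x ≤ dist z yh + dist yh x := dist_triangle _ _ _
      _ < α * δ + (2 + β) * δ := by
          have := mem_ball.mp hz
          rw [dist_comm yh x]
          linarith
      _ = (2 + β + α) * δ := by ring
  have hAbig : A ⊆ ball yh (2 ^ k * (α * δ)) ∩ F := by
    rintro z ⟨hz, hzF⟩
    refine ⟨mem_ball.mpr ?_, hzF⟩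
    have h2 : (4 + 2*β + α) < 2 ^ k * α := by
      rw [div_lt_iff₀ hα] at hk; linarith
    calc dist z yh ≤ dist z x + dist x yh := dist_triangle _ _ _
      _ < (2 + β + α) * δ + (2 + β) * δ := by
          have := mem_ball.mp hz; linarith
      _ = (4 + 2*β + α) * δ := by ring
      _ ≤ 2 ^ k * (α * δ) := by nlinarith
  -- measure facts
  have hdoubyh := doubling_iter μ F c₃ yh (fun r hr => (hdoub yh hyhF r hr).2.2) k
  have hβ : 0 < β := hα.trans hαβ
  have hR : 0 < (2 + β + α) * δ := by positivity
  obtain ⟨hSpos, hSfin, -⟩ := hdoub yh hyhF (α * δ) (by positivity)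
  obtain ⟨-, hAfin, -⟩ := hdoub x hxF ((2 + β + α) * δ) hR
  have haS : μ A ≤ c₃ ^ k * μ S :=
    le_trans (measure_mono hAbig) (hdoubyh (α * δ) (by positivity))
  have htS : μ (ball yh δ ∩ F) ≤ c₃ ^ k * μ S := by
    refine le_trans (measure_mono ?_) (hdoubyh (α * δ) (by positivity))
    apply inter_subset_inter_left
    apply ball_subset_ball
    have h2 : (1:ℝ) ≤ 2 ^ k * α := by
      rw [div_lt_iff₀ hα] at hk; nlinarith
    nlinarith
  have hSmeas : MeasurableSet S :=
    isOpen_ball.measurableSet.inter isClosed_frontier.measurableSet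
  -- density hypothesis at x with radius (2+β+α)δ
  have h1 : (1 - ε) * μ A ≤ μ (E ∩ A) := hxdens ((2 + β + α) * δ) hR
  -- splitting
  have hsplit : E ∩ A ⊆ (E ∩ B ∩ F) ∪ (A \ S) := by
    rintro z ⟨hzE, hzA⟩
    by_cases hzB : z ∈ B
    · exact Or.inl ⟨⟨hzE, hzB⟩, hzA.2⟩
    · exact Or.inr ⟨hzA, fun hzS => hzB (hSB hzS)⟩
  have h2 : μ (E ∩ A) ≤ μ (E ∩ B ∩ F) + (μ A - μ S) := by
    calc μ (E ∩ A) ≤ μ ((E ∩ B ∩ F) ∪ (A \ S)) := measure_mono hsplit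
      _ ≤ μ (E ∩ B ∩ F) + μ (A \ S) := measure_union_le _ _
      _ = μ (E ∩ B ∩ F) + (μ A - μ S) := by
          rw [measure_diff hSA hSmeas.nullMeasurableSet hSfin.ne]
  have hsA : μ S ≤ μ A := measure_mono hSA
  have hεa : ε * μ A ≤ 2⁻¹ * μ S := by
    calc ε * μ A ≤ ε * (c₃ ^ k * μ S) := mul_le_mul_right haS ε
      _ = (ε * c₃ ^ k) * μ S := (mul_assoc _ _ _).symm
      _ = 2⁻¹ * μ S := by rw [hεc]
  have hhalfS : 2⁻¹ * μ S ≤ μ S := by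
    calc 2⁻¹ * μ S ≤ 1 * μ S := mul_le_mul_left (by norm_num) _
      _ = μ S := one_mul _
  -- main arithmetic: 2⁻¹ μ S ≤ μ(E ∩ B ∩ F)
  have hmain : 2⁻¹ * μ S ≤ μ (E ∩ B ∩ F) := by
    have hsub : (1 - ε) * μ A = μ A - ε * μ A := by
      rw [ENNReal.sub_mul (fun _ _ => hAfin.ne), one_mul]
    have h3 : μ A - 2⁻¹ * μ S ≤ μ (E ∩ B ∩ F) + (μ A - μ S) := by
      calc μ A - 2⁻¹ * μ S ≤ μ A - ε * μ A := tsub_le_tsub_left hεa _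
        _ = (1 - ε) * μ A := hsub.symm
        _ ≤ μ (E ∩ A) := h1
        _ ≤ μ (E ∩ B ∩ F) + (μ A - μ S) := h2
    have h4 : μ A - 2⁻¹ * μ S + μ S ≤ μ (E ∩ B ∩ F) + μ A := by
      calc μ A - 2⁻¹ * μ S + μ S ≤ μ (E ∩ B ∩ F) + (μ A - μ S) + μ S :=
            add_le_add h3 le_rfl
        _ = μ (E ∩ B ∩ F) + ((μ A - μ S) + μ S) := add_assoc _ _ _
        _ = μ (E ∩ B ∩ F) + μ A := by rw [tsub_add_cancel_of_le hsA]
    have hhalfA : 2⁻¹ * μ S ≤ μ A := le_trans hhalfS hsA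
    have hhalffin : 2⁻¹ * μ S ≠ ∞ := (lt_of_le_of_lt hhalfS hSfin).ne
    have h4' : μ A + μ S - 2⁻¹ * μ S ≤ μ (E ∩ B ∩ F) + μ A := by
      rw [← ENNReal.sub_add_eq_add_sub hhalfA hhalffin]
      exact h4
    have hhalves : 2⁻¹ * μ S + 2⁻¹ * μ S = μ S := by
      rw [← two_mul, ← mul_assoc, ENNReal.mul_inv_cancel two_ne_zero ENNReal.ofNat_ne_top,
        one_mul]
    have h5 : μ A + 2⁻¹ * μ S ≤ μ (E ∩ B ∩ F) + μ A := by
      refine le_trans (ENNReal.le_sub_of_add_le_right hhalffin ?_) h4'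
      rw [add_assoc, hhalves]
    calc 2⁻¹ * μ S = μ A + 2⁻¹ * μ S - μ A :=
          (ENNReal.add_sub_cancel_left hAfin.ne).symm
      _ ≤ μ (E ∩ B ∩ F) + μ A - μ A := tsub_le_tsub_right h5 _
      _ = μ (E ∩ B ∩ F) := ENNReal.add_sub_cancel_right hAfin.ne
  -- conclude
  calc ε * μ (ball yh δ ∩ F) ≤ ε * (c₃ ^ k * μ S) := mul_le_mul_right htS ε
    _ = 2⁻¹ * μ S := by rw [← mul_assoc, hεc]
    _ ≤ μ (E ∩ B ∩ F) := hmain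
end
end

section
/- Let 0 < p < ∞ and 0 < α ≤ β < ∞. There exists a constant C, depending only on p, α, β and the doubling constant c₃ of μ, such that for every continuous function F : Ω → ℝ one has ‖𝒩_β F‖_{L^p(∂Ω, μ)} ≤ C ‖𝒩_α F‖_{L^p(∂Ω, μ)}, where 𝒩_α F(x) := sup_{Y ∈ Γ^α(x)} |F(Y)| is the non-tangential maximal function. -/
open Metric MeasureTheory Set
open scoped ENNReal

noncomputable section

/-- The non-tangential maximal function `𝒩_α F(x) = sup_{Y ∈ Γ^α(x)} |F(Y)|`. -/
def ntMax {n : ℕ} (Ω : Set (EuclideanSpace ℝ (Fin (n + 1)))) (α : ℝ)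
    (F : EuclideanSpace ℝ (Fin (n + 1)) → ℝ) (x : EuclideanSpace ℝ (Fin (n + 1))) :
    ℝ≥0∞ :=
  ⨆ Y ∈ cone Ω α x, ENNReal.ofReal |F Y|

namespace Statement4Aux

lemma two_zpow_mono {a b : ℤ} (h : a ≤ b) : (2:ℝ≥0∞)^a ≤ 2^b :=
  ENNReal.zpow_le_of_le one_le_two h

lemma two_zpow_pos (n : ℤ) : (0:ℝ≥0∞) < 2^n :=
  ENNReal.zpow_pos (by norm_num) (by norm_num) n

lemma two_zpow_lt_top (n : ℤ) : (2:ℝ≥0∞)^n < ⊤ :=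
  ENNReal.zpow_lt_top (by norm_num) (by norm_num) n

lemma two_zpow_add (a b : ℤ) : (2:ℝ≥0∞)^(a+b) = 2^a * 2^b :=
  ENNReal.zpow_add (by norm_num) (by norm_num) a b

lemma two_zpow_succ (a : ℤ) : (2:ℝ≥0∞)^(a+1) = 2^a * 2 := by
  rw [two_zpow_add, zpow_one]

/-- Geometric series of `2^n` over `n ≤ M` in `ℝ≥0∞`. -/
lemma tsum_two_zpow_le (M : ℤ) :
    (∑' n : ℤ, (if n ≤ M then (2:ℝ≥0∞)^n else 0)) = 2^(M+1) := by
  have key : (∑' n : ℤ, (if n ≤ M then (2:ℝ≥0∞)^n else 0))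
      = ∑' k : ℕ, (2:ℝ≥0∞)^(M - (k:ℤ)) := by
    refine (tsum_eq_tsum_of_ne_zero_bij (fun k => M - ((k : ℕ) : ℤ)) ?_ ?_ ?_)
    · intro k l hkl
      simp only at hkl
      have : ((k:ℕ):ℤ) = ((l:ℕ):ℤ) := by omega
      exact Subtype.ext (by exact_mod_cast this)
    · intro n hn
      have hnM : n ≤ M := by
        by_contra h
        exact hn (by simp [if_neg h])
      refine ⟨⟨(M - n).toNat, ?_⟩, ?_⟩
      · simp only [Function.mem_support]
        exact (two_zpow_pos _).ne'
      · simp only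
        omega
    · intro k
      rw [if_pos (by omega)]
  rw [key]
  have reform : ∀ k : ℕ, (2:ℝ≥0∞)^(M - (k:ℤ)) = 2^M * (2⁻¹)^k := by
    intro k
    rw [sub_eq_add_neg, two_zpow_add]
    congr 1
    rw [ENNReal.zpow_neg, zpow_natCast, ← ENNReal.inv_pow]
  simp_rw [reform]
  rw [ENNReal.tsum_mul_left, ENNReal.tsum_geometric, ENNReal.one_sub_inv_two, inv_inv,
    two_zpow_succ]

lemma dyadic_le (c : ℝ≥0∞) :
    (∑' n : ℤ, (2:ℝ≥0∞)^n * (if (2:ℝ≥0∞)^n < c then 1 else 0)) ≤ 2 * c := by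
  rcases eq_or_ne c ⊤ with rfl | hctop
  · simp [ENNReal.mul_top]
  rcases eq_or_ne c 0 with rfl | hc0
  · simp
  obtain ⟨M, hM1, hM2⟩ := ENNReal.exists_mem_Ico_zpow hc0 hctop
    (by norm_num : (1:ℝ≥0∞) < 2) (by norm_num)
  calc (∑' n : ℤ, (2:ℝ≥0∞)^n * (if (2:ℝ≥0∞)^n < c then 1 else 0))
      ≤ ∑' n : ℤ, (if n ≤ M then (2:ℝ≥0∞)^n else 0) := by
        refine ENNReal.tsum_le_tsum fun n => ?_
        by_cases h : (2:ℝ≥0∞)^n < c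
        · rw [if_pos h, mul_one, if_pos]
          by_contra hn
          exact absurd (lt_trans h hM2) (not_lt.mpr (two_zpow_mono (by omega)))
        · simp [if_neg h]
    _ = 2^(M+1) := tsum_two_zpow_le M
    _ = 2 * 2^M := by rw [two_zpow_succ, mul_comm]
    _ ≤ 2 * c := mul_le_mul_right hM1 2

lemma dyadic_ge (c : ℝ≥0∞) :
    c ≤ ∑' n : ℤ, (2:ℝ≥0∞)^(n+1) * (if (2:ℝ≥0∞)^n < c then 1 else 0) := by
  rcases eq_or_ne c 0 with rfl | hc0
  · simp
  rcases eq_or_ne c ⊤ with rfl | hctop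
  · refine le_trans (le_of_eq ENNReal.iSup_natCast.symm) (iSup_le fun k => ?_)
    have h1 : ((k:ℕ):ℝ≥0∞) ≤ (2:ℝ≥0∞)^((k:ℤ)+1) := by
      calc ((k:ℕ):ℝ≥0∞) ≤ ((2^k : ℕ) : ℝ≥0∞) := by
            exact_mod_cast (Nat.lt_two_pow_self (n := k)).le
        _ = (2:ℝ≥0∞)^(k:ℤ) := by push_cast; rw [zpow_natCast]
        _ ≤ (2:ℝ≥0∞)^((k:ℤ)+1) := two_zpow_mono (by omega)
    refine h1.trans ?_
    have h3 : (2:ℝ≥0∞)^((k:ℤ)+1)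
        = (fun n : ℤ => (2:ℝ≥0∞)^(n+1) * (if (2:ℝ≥0∞)^n < ⊤ then 1 else 0)) ((k:ℕ):ℤ) := by
      simp only
      rw [if_pos (two_zpow_lt_top _), mul_one]
    rw [h3]
    exact ENNReal.le_tsum _
  obtain ⟨M, hM1, hM2⟩ := ENNReal.exists_mem_Ico_zpow hc0 hctop
    (by norm_num : (1:ℝ≥0∞) < 2) (by norm_num)
  rcases eq_or_lt_of_le hM1 with heq | hlt
  · -- c = 2^M; use index M-1
    have h2 : (2:ℝ≥0∞)^M = 2^(M-1) * 2 := by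
      have := two_zpow_succ (M-1)
      simpa using this
    have hind : (2:ℝ≥0∞)^(M-1) < c := by
      rw [← heq, h2]
      conv_lhs => rw [← mul_one ((2:ℝ≥0∞)^(M-1))]
      exact ENNReal.mul_lt_mul_right (two_zpow_pos _).ne' (two_zpow_lt_top _).ne (by norm_num : (1:ℝ≥0∞) < 2)
    have := ENNReal.le_tsum
      (f := fun n : ℤ => (2:ℝ≥0∞)^(n+1) * (if (2:ℝ≥0∞)^n < c then 1 else 0)) (M-1)
    refine le_trans ?_ this
    rw [if_pos hind, mul_one]
    simp only [sub_add_cancel]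
    exact heq.ge
  · have := ENNReal.le_tsum
      (f := fun n : ℤ => (2:ℝ≥0∞)^(n+1) * (if (2:ℝ≥0∞)^n < c then 1 else 0)) M
    refine le_trans ?_ this
    rw [if_pos hlt, mul_one]
    exact hM2.le


/-- If the distribution function of `g` is dominated by `K` times that of `f`,
then `∫⁻ g ≤ 4 K ∫⁻ f`. -/
lemma lintegral_le_of_dist {X : Type*} [MeasurableSpace X] (μ : Measure X)
    (f g : X → ℝ≥0∞) (hf : Measurable f) (hg : Measurable g) (K : ℝ≥0∞)
    (h : ∀ t : ℝ≥0∞, μ {x | t < g x} ≤ K * μ {x | t < f x}) :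
    ∫⁻ x, g x ∂μ ≤ 4 * K * ∫⁻ x, f x ∂μ := by
  have meas_g : ∀ n : ℤ, MeasurableSet {x | (2:ℝ≥0∞)^n < g x} := fun n => hg measurableSet_Ioi
  have meas_f : ∀ n : ℤ, MeasurableSet {x | (2:ℝ≥0∞)^n < f x} := fun n => hf measurableSet_Ioi
  have step1 : ∫⁻ x, g x ∂μ ≤ ∑' n : ℤ, (2:ℝ≥0∞)^(n+1) * μ {x | (2:ℝ≥0∞)^n < g x} := by
    calc ∫⁻ x, g x ∂μ
        ≤ ∫⁻ x, ∑' n : ℤ, ({y | (2:ℝ≥0∞)^n < g y}).indicator (fun _ => (2:ℝ≥0∞)^(n+1)) x ∂μ := by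
          refine lintegral_mono fun x => ?_
          refine (dyadic_ge (g x)).trans (le_of_eq (tsum_congr fun n => ?_))
          by_cases hx : (2:ℝ≥0∞)^n < g x
          · simp [Set.indicator_of_mem, hx, Set.mem_setOf_eq]
          · simp [hx, Set.indicator_of_notMem]
      _ = ∑' n : ℤ, ∫⁻ x, ({y | (2:ℝ≥0∞)^n < g y}).indicator (fun _ => (2:ℝ≥0∞)^(n+1)) x ∂μ :=
          lintegral_tsum fun n => (measurable_const.indicator (meas_g n)).aemeasurable
      _ = ∑' n : ℤ, (2:ℝ≥0∞)^(n+1) * μ {x | (2:ℝ≥0∞)^n < g x} :=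
          tsum_congr fun n => lintegral_indicator_const (meas_g n) _
  have step2 : ∑' n : ℤ, (2:ℝ≥0∞)^n * μ {x | (2:ℝ≥0∞)^n < f x} ≤ 2 * ∫⁻ x, f x ∂μ := by
    calc ∑' n : ℤ, (2:ℝ≥0∞)^n * μ {x | (2:ℝ≥0∞)^n < f x}
        = ∫⁻ x, ∑' n : ℤ, ({y | (2:ℝ≥0∞)^n < f y}).indicator (fun _ => (2:ℝ≥0∞)^n) x ∂μ := by
          rw [lintegral_tsum fun n => (measurable_const.indicator (meas_f n)).aemeasurable]
          exact (tsum_congr fun n => (lintegral_indicator_const (meas_f n) _)).symm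
      _ ≤ ∫⁻ x, 2 * f x ∂μ := by
          refine lintegral_mono fun x => ?_
          refine le_trans (le_of_eq (tsum_congr fun n => ?_)) (dyadic_le (f x))
          by_cases hx : (2:ℝ≥0∞)^n < f x
          · simp [Set.indicator_of_mem, hx, Set.mem_setOf_eq]
          · simp [hx, Set.indicator_of_notMem]
      _ = 2 * ∫⁻ x, f x ∂μ := lintegral_const_mul 2 hf
  calc ∫⁻ x, g x ∂μ
      ≤ ∑' n : ℤ, (2:ℝ≥0∞)^(n+1) * μ {x | (2:ℝ≥0∞)^n < g x} := step1
    _ ≤ ∑' n : ℤ, (2:ℝ≥0∞)^(n+1) * (K * μ {x | (2:ℝ≥0∞)^n < f x}) :=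
        ENNReal.tsum_le_tsum fun n => mul_le_mul_right (h _) _
    _ = ∑' n : ℤ, (2*K) * ((2:ℝ≥0∞)^n * μ {x | (2:ℝ≥0∞)^n < f x}) :=
        tsum_congr fun n => by rw [two_zpow_succ]; ring
    _ = (2*K) * ∑' n : ℤ, (2:ℝ≥0∞)^n * μ {x | (2:ℝ≥0∞)^n < f x} := ENNReal.tsum_mul_left
    _ ≤ (2*K) * (2 * ∫⁻ x, f x ∂μ) := mul_le_mul_right step2 _
    _ = 4 * K * ∫⁻ x, f x ∂μ := by ring



lemma ntMax_measurable {n : ℕ} (Ω : Set (EuclideanSpace ℝ (Fin (n+1)))) (α : ℝ)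
    (F : EuclideanSpace ℝ (Fin (n+1)) → ℝ) : Measurable (ntMax Ω α F) := by
  classical
  have hrepr : ntMax Ω α F = fun x => ⨆ Y : EuclideanSpace ℝ (Fin (n+1)),
      (if Y ∈ Ω then ball Y ((1+α) * bdist Ω Y) else ∅).indicator
        (fun _ => ENNReal.ofReal |F Y|) x := by
    funext x
    rw [ntMax]
    refine iSup_congr fun Y => ?_
    by_cases hY : Y ∈ cone Ω α x
    · rw [iSup_pos hY, if_pos hY.1, Set.indicator_of_mem]
      rw [mem_ball, dist_comm]
      exact hY.2
    · rw [iSup_neg hY]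
      by_cases hYΩ : Y ∈ Ω
      · rw [if_pos hYΩ,
          Set.indicator_of_notMem (fun hx => hY ⟨hYΩ, by rwa [mem_ball, dist_comm] at hx⟩)]
        simp
      · rw [if_neg hYΩ]
        simp
  rw [hrepr]
  refine LowerSemicontinuous.measurable (lowerSemicontinuous_iSup fun Y => ?_)
  refine IsOpen.lowerSemicontinuous_indicator ?_ (by positivity)
  split_ifs
  exacts [isOpen_ball, isOpen_empty]

set_option maxHeartbeats 1000000 in
/-- The weak-type / distribution function inequality for change of aperture. -/
lemma weak_ineq {n : ℕ} {Ω : Set (EuclideanSpace ℝ (Fin (n+1)))} (hΩ : IsOpen Ω)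
    (hfr : (frontier Ω).Nonempty) {α β : ℝ} (hα : 0 < α) (hαβ : α ≤ β)
    (μ : Measure (EuclideanSpace ℝ (Fin (n+1)))) {c₃ : ℝ≥0∞} (hc₃ : 1 ≤ c₃)
    (hdbl : ∀ x ∈ frontier Ω, ∀ r : ℝ, 0 < r →
      0 < μ (ball x r ∩ frontier Ω) ∧ μ (ball x r ∩ frontier Ω) < ∞ ∧
        μ (ball x (2*r) ∩ frontier Ω) ≤ c₃ * μ (ball x r ∩ frontier Ω))
    {m : ℕ} (hm : 6*(2+β) ≤ 2^m * α)
    (F : EuclideanSpace ℝ (Fin (n+1)) → ℝ) (t : ℝ≥0∞) :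
    μ ({x | t < ntMax Ω β F x} ∩ frontier Ω)
      ≤ c₃^m * μ ({x | t < ntMax Ω α F x} ∩ frontier Ω) := by
  have hβ : 0 < β := lt_of_lt_of_le hα hαβ
  have hc₃0 : (c₃:ℝ≥0∞)^m ≠ 0 := (ENNReal.pow_pos (lt_of_lt_of_le zero_lt_one hc₃) m).ne'
  set E := {x | t < ntMax Ω α F x} ∩ frontier Ω with hEdef
  -- iterated doubling
  have dbl2 : ∀ y ∈ frontier Ω, ∀ r s : ℝ, 0 < s → r ≤ 2^m * s →
      μ (ball y r ∩ frontier Ω) ≤ c₃^m * μ (ball y s ∩ frontier Ω) := by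
    have iter : ∀ y ∈ frontier Ω, ∀ s : ℝ, 0 < s → ∀ k : ℕ,
        μ (ball y (2^k * s) ∩ frontier Ω) ≤ c₃^k * μ (ball y s ∩ frontier Ω) := by
      intro y hy s hs k
      induction k with
      | zero => simp
      | succ k ih =>
          have hrw : (2:ℝ)^(k+1) * s = 2 * (2^k * s) := by ring
          rw [hrw]
          calc μ (ball y (2 * (2^k * s)) ∩ frontier Ω)
              ≤ c₃ * μ (ball y (2^k * s) ∩ frontier Ω) := (hdbl y hy (2^k * s) (by positivity)).2.2
            _ ≤ c₃ * (c₃^k * μ (ball y s ∩ frontier Ω)) := mul_le_mul_right ih c₃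
            _ = c₃^(k+1) * μ (ball y s ∩ frontier Ω) := by rw [pow_succ]; ring
    intro y hy r s hs hr
    calc μ (ball y r ∩ frontier Ω)
        ≤ μ (ball y (2^m * s) ∩ frontier Ω) :=
          measure_mono (inter_subset_inter_left _ (ball_subset_ball hr))
      _ ≤ c₃^m * μ (ball y s ∩ frontier Ω) := iter y hy s hs m
  -- the key geometric claim
  have key : ∀ x ∈ {x | t < ntMax Ω β F x} ∩ frontier Ω,
      ∃ y ∈ frontier Ω, ∃ d : ℝ, 0 < d ∧ dist x y < (2+β)*d ∧
        ball y (α*d) ∩ frontier Ω ⊆ E := by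
    rintro x ⟨hx, hxfr⟩
    rw [Set.mem_setOf_eq, ntMax, lt_iSup_iff] at hx
    obtain ⟨Y, hY⟩ := hx
    have hYc : Y ∈ cone Ω β x := by
      by_contra hc
      rw [iSup_neg hc] at hY
      exact absurd hY (by simp)
    rw [iSup_pos hYc] at hY
    obtain ⟨hYΩ, hYx⟩ := hYc
    have hYfr : Y ∉ frontier Ω := by
      intro h
      have := hΩ.inter_frontier_eq
      exact absurd (Set.mem_inter hYΩ h) (by rw [this]; exact Set.notMem_empty Y)
    have hd : 0 < bdist Ω Y :=
      (IsClosed.notMem_iff_infDist_pos isClosed_frontier hfr).mp hYfr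
    obtain ⟨y, hyfr, hyd⟩ := IsClosed.exists_infDist_eq_dist isClosed_frontier hfr Y
    have hdy : dist Y y = bdist Ω Y := hyd.symm
    refine ⟨y, hyfr, bdist Ω Y, hd, ?_, ?_⟩
    · have h1 : dist x y ≤ dist x Y + dist Y y := dist_triangle x Y y
      have h2 : dist x Y = dist Y x := dist_comm x Y
      nlinarith [hYx]
    · rintro z ⟨hzball, hzfr⟩
      refine ⟨?_, hzfr⟩
      show t < ntMax Ω α F z
      have hYz : Y ∈ cone Ω α z := by
        refine ⟨hYΩ, ?_⟩
        have h1 : dist Y z ≤ dist Y y + dist y z := dist_triangle Y y z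
        have h2 : dist y z = dist z y := dist_comm y z
        have h3 : dist z y < α * bdist Ω Y := by rwa [mem_ball] at hzball
        nlinarith
      calc t < ENNReal.ofReal |F Y| := hY
        _ ≤ ntMax Ω α F z :=
            le_iSup₂ (f := fun Y (_ : Y ∈ cone Ω α z) => ENNReal.ofReal |F Y|) Y hYz
  by_cases hEtop : μ E = ⊤
  · rw [hEdef] at hEtop
    rw [hEtop, ENNReal.mul_top hc₃0]
    exact le_top
  obtain ⟨x₀, hx₀⟩ := hfr
  -- bounded localization
  have bounded : ∀ ρ : ℝ, 0 < ρ →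
      μ (({x | t < ntMax Ω β F x} ∩ frontier Ω) ∩ ball x₀ ρ) ≤ c₃^m * μ E := by
    intro ρ hρ
    set A := ({x | t < ntMax Ω β F x} ∩ frontier Ω) ∩ ball x₀ ρ with hAdef
    have choice : ∀ x : EuclideanSpace ℝ (Fin (n+1)), ∃ y : EuclideanSpace ℝ (Fin (n+1)),
        ∃ d : ℝ, x ∈ A → (y ∈ frontier Ω ∧ 0 < d ∧ dist x y < (2+β)*d ∧
          ball y (α*d) ∩ frontier Ω ⊆ E) := by
      intro x
      by_cases hx : x ∈ A
      · obtain ⟨y, hy, d, hd⟩ := key x hx.1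
        exact ⟨y, d, fun _ => ⟨hy, hd⟩⟩
      · exact ⟨x₀, 1, fun h => absurd h hx⟩
    choose Y D hYD using choice
    by_cases hbig : ∃ x ∈ A, ρ < D x
    · -- one big ball covers everything
      obtain ⟨x', hx'A, hx'ρ⟩ := hbig
      obtain ⟨hYfr', hD'pos, hdist', hsub'⟩ := hYD x' hx'A
      have hcov : A ⊆ ball (Y x') ((4+β) * D x') ∩ frontier Ω := by
        rintro z ⟨⟨hz1, hzfr⟩, hzball⟩
        refine ⟨?_, hzfr⟩
        rw [mem_ball]
        have h1 : dist z (Y x') ≤ dist z x₀ + dist x₀ x' + dist x' (Y x') :=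
          dist_triangle4 z x₀ x' (Y x')
        have h2 : dist z x₀ < ρ := by rwa [mem_ball] at hzball
        have h3 : dist x₀ x' < ρ := by
          rw [dist_comm]
          exact mem_ball.mp hx'A.2
        nlinarith
      calc μ A ≤ μ (ball (Y x') ((4+β) * D x') ∩ frontier Ω) := measure_mono hcov
        _ ≤ c₃^m * μ (ball (Y x') (α * D x') ∩ frontier Ω) := by
            refine dbl2 (Y x') hYfr' _ _ (by positivity) ?_
            have : (4+β) ≤ 2^m * α := by nlinarith
            nlinarith
        _ ≤ c₃^m * μ E := mul_le_mul_right (measure_mono hsub') _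
    · push_neg at hbig
      -- Vitali covering argument
      have h2β : (0:ℝ) < 2 + β := by linarith
      obtain ⟨u, hu_sub, hu_disj, hu_cov⟩ :=
        Vitali.exists_disjoint_subfamily_covering_enlargement_closedBall A Y
          (fun x => (2+β) * D x) ((2+β)*ρ)
          (fun a ha => mul_le_mul_of_nonneg_left (hbig a ha) h2β.le) 4 (by norm_num)
      have hS_meas : ∀ b, MeasurableSet (ball (Y b) (α * D b) ∩ frontier Ω) :=
        fun b => measurableSet_ball.inter isClosed_frontier.measurableSet
      have hS_sub : ∀ b ∈ u, ball (Y b) (α * D b) ∩ frontier Ω ⊆ E :=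
        fun b hb => (hYD b (hu_sub hb)).2.2.2
      have hS_disj : u.PairwiseDisjoint (fun b => ball (Y b) (α * D b) ∩ frontier Ω) := by
        intro a ha b hb hab
        refine (hu_disj ha hb hab).mono ?_ ?_
        · refine subset_trans (inter_subset_left) ?_
          refine subset_trans (ball_subset_closedBall) (closedBall_subset_closedBall ?_)
          have := (hYD a (hu_sub ha)).2.1
          nlinarith
        · refine subset_trans (inter_subset_left) ?_
          refine subset_trans (ball_subset_closedBall) (closedBall_subset_closedBall ?_)
          have := (hYD b (hu_sub hb)).2.1
          nlinarith
      have hu_cnt : u.Countable := by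
        have hcnt := MeasureTheory.Measure.countable_meas_pos_of_disjoint_of_meas_iUnion_ne_top μ
          (As := fun b : u => ball (Y b.1) (α * D b.1) ∩ frontier Ω)
          (fun b => hS_meas b.1)
          (fun i j hij => hS_disj i.2 j.2 (Subtype.coe_ne_coe.mpr hij))
          (by
            refine ne_top_of_le_ne_top hEtop (measure_mono ?_)
            exact Set.iUnion_subset fun b => hS_sub b.1 b.2)
        have huniv : {i : ↥u | 0 < μ (ball (Y i.1) (α * D i.1) ∩ frontier Ω)} = Set.univ := by
          refine Set.eq_univ_of_forall fun b => ?_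
          have hDb := (hYD b.1 (hu_sub b.2)).2.1
          exact (hdbl (Y b.1) ((hYD b.1 (hu_sub b.2)).1) (α * D b.1) (by positivity)).1
        rw [huniv] at hcnt
        rw [Set.countable_univ_iff] at hcnt
        exact (Set.countable_coe_iff).mp hcnt
      have hcov : A ⊆ ⋃ b ∈ u, ball (Y b) (5 * ((2+β) * D b)) ∩ frontier Ω := by
        intro a ha
        obtain ⟨b, hb, hsub⟩ := hu_cov a ha
        have haY : a ∈ closedBall (Y a) ((2+β) * D a) :=
          mem_closedBall.mpr (hYD a ha).2.2.1.le
        have hab := hsub haY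
        rw [mem_closedBall] at hab
        have hDb := (hYD b (hu_sub hb)).2.1
        refine Set.mem_biUnion hb ⟨?_, ha.1.2⟩
        rw [mem_ball]
        nlinarith
      haveI : Countable ↥u := hu_cnt.to_subtype
      have hdisj' : Pairwise (Function.onFun Disjoint fun b : ↥u => ball (Y b.1) (α * D b.1) ∩ frontier Ω) :=
        fun i j hij => hS_disj i.2 j.2 (Subtype.coe_ne_coe.mpr hij)
      have hUeq : μ (⋃ b : ↥u, ball (Y b.1) (α * D b.1) ∩ frontier Ω)
          = ∑' b : ↥u, μ (ball (Y b.1) (α * D b.1) ∩ frontier Ω) :=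
        measure_iUnion hdisj' (fun b : ↥u => hS_meas b.1)
      calc μ A ≤ μ (⋃ b ∈ u, ball (Y b) (5 * ((2+β) * D b)) ∩ frontier Ω) := measure_mono hcov
        _ ≤ ∑' b : ↥u, μ (ball (Y b.1) (5 * ((2+β) * D b.1)) ∩ frontier Ω) :=
            measure_biUnion_le μ hu_cnt _
        _ ≤ ∑' b : ↥u, c₃^m * μ (ball (Y b.1) (α * D b.1) ∩ frontier Ω) := by
            refine ENNReal.tsum_le_tsum fun b => ?_
            have hDb := (hYD b.1 (hu_sub b.2)).2.1
            refine dbl2 (Y b.1) ((hYD b.1 (hu_sub b.2)).1) _ _ (by positivity) ?_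
            nlinarith
        _ = c₃^m * ∑' b : ↥u, μ (ball (Y b.1) (α * D b.1) ∩ frontier Ω) := ENNReal.tsum_mul_left
        _ = c₃^m * μ (⋃ b : ↥u, ball (Y b.1) (α * D b.1) ∩ frontier Ω) := by rw [hUeq]
        _ ≤ c₃^m * μ E := by
            refine mul_le_mul_right (measure_mono ?_) _
            exact Set.iUnion_subset fun b => hS_sub b.1 b.2
  -- exhaust by balls
  have hexh : {x | t < ntMax Ω β F x} ∩ frontier Ω =
      ⋃ k : ℕ, (({x | t < ntMax Ω β F x} ∩ frontier Ω) ∩ ball x₀ ((k:ℝ)+1)) := by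
    ext z
    constructor
    · intro hz
      obtain ⟨k, hk⟩ := exists_nat_gt (dist z x₀)
      exact Set.mem_iUnion.mpr ⟨k, hz, mem_ball.mpr (by linarith)⟩
    · rintro ⟨s, ⟨k, rfl⟩, hz⟩
      exact hz.1
  rw [hexh]
  have hdir : Directed (· ⊆ ·)
      (fun k : ℕ => ({x | t < ntMax Ω β F x} ∩ frontier Ω) ∩ ball x₀ ((k:ℝ)+1)) := by
    intro i j
    refine ⟨max i j, Set.inter_subset_inter_right _ (ball_subset_ball ?_),
      Set.inter_subset_inter_right _ (ball_subset_ball ?_)⟩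
    · have h : (i:ℝ) ≤ ((max i j : ℕ) : ℝ) := by exact_mod_cast le_max_left i j
      linarith
    · have h : (j:ℝ) ≤ ((max i j : ℕ) : ℝ) := by exact_mod_cast le_max_right i j
      linarith
  rw [Directed.measure_iUnion hdir]
  exact iSup_le fun k => bounded ((k:ℝ)+1) (by positivity)

end Statement4Aux

/-- change of aperture for the non-tangential maximal function in
`L^p(∂Ω,μ)`: `‖𝒩_β F‖_{L^p(μ)} ≤ C ‖𝒩_α F‖_{L^p(μ)}` with `C` depending only on
`p`, `α`, `β` and the doubling constant `c₃` of `μ`. -/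

theorem statement4 (p α β : ℝ) (hp : 0 < p) (hα : 0 < α) (hαβ : α ≤ β)
    (c₃ : ℝ≥0∞) (hc₃ : 1 < c₃) (hc₃' : c₃ < ∞) :
    ∃ C : ℝ≥0∞, 0 < C ∧ C < ∞ ∧
      ∀ (n : ℕ) (Ω : Set (EuclideanSpace ℝ (Fin (n + 1)))),
        IsOpen Ω → Ω.Nonempty → (frontier Ω).Nonempty →
        ∀ μ : Measure (EuclideanSpace ℝ (Fin (n + 1))),
          -- μ is a doubling measure on ∂Ω with constant c₃
          (∀ x ∈ frontier Ω, ∀ r : ℝ, 0 < r →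
            0 < μ (ball x r ∩ frontier Ω) ∧ μ (ball x r ∩ frontier Ω) < ∞ ∧
              μ (ball x (2 * r) ∩ frontier Ω) ≤ c₃ * μ (ball x r ∩ frontier Ω)) →
          ∀ F : EuclideanSpace ℝ (Fin (n + 1)) → ℝ, ContinuousOn F Ω →
            (∫⁻ x in frontier Ω, ntMax Ω β F x ^ p ∂μ) ^ p⁻¹ ≤
              C * (∫⁻ x in frontier Ω, ntMax Ω α F x ^ p ∂μ) ^ p⁻¹ := by
  classical
  obtain ⟨m, hm'⟩ := pow_unbounded_of_one_lt (6*(2+β)/α) (one_lt_two (α := ℝ))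
  have hm : 6*(2+β) ≤ 2^m * α := by
    rw [div_lt_iff₀ hα] at hm'
    linarith
  have h4top : (4:ℝ≥0∞) * c₃^m ≠ ⊤ :=
    ENNReal.mul_ne_top (by norm_num) (ENNReal.pow_ne_top hc₃'.ne)
  refine ⟨((4:ℝ≥0∞) * c₃^m) ^ p⁻¹, ?_, ?_, ?_⟩
  · refine ENNReal.rpow_pos (ENNReal.mul_pos (by norm_num) ?_) h4top
    exact (ENNReal.pow_pos (lt_of_lt_of_le zero_lt_one hc₃.le) m).ne'
  · exact ENNReal.rpow_lt_top_of_nonneg (inv_nonneg.mpr hp.le) h4top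
  · intro n Ω hΩ hΩne hfrne μ hdbl F hF
    have hNβ := Statement4Aux.ntMax_measurable Ω β F
    have hNα := Statement4Aux.ntMax_measurable Ω α F
    have hmeasβ : Measurable fun x => ntMax Ω β F x ^ p :=
      ENNReal.continuous_rpow_const.measurable.comp hNβ
    have hmeasα : Measurable fun x => ntMax Ω α F x ^ p :=
      ENNReal.continuous_rpow_const.measurable.comp hNα
    have hiff : ∀ (t : ℝ≥0∞) (a : ℝ≥0∞), t < a ^ p ↔ t ^ p⁻¹ < a := by
      intro t a
      constructor
      · intro h
        have := ENNReal.rpow_lt_rpow h (inv_pos.mpr hp)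
        rwa [ENNReal.rpow_rpow_inv hp.ne'] at this
      · intro h
        have := ENNReal.rpow_lt_rpow h hp
        rwa [ENNReal.rpow_inv_rpow hp.ne'] at this
    have hdist : ∀ t : ℝ≥0∞,
        (μ.restrict (frontier Ω)) {x | t < ntMax Ω β F x ^ p}
          ≤ c₃^m * (μ.restrict (frontier Ω)) {x | t < ntMax Ω α F x ^ p} := by
      intro t
      have hsetβ : {x | t < ntMax Ω β F x ^ p} = {x | t ^ p⁻¹ < ntMax Ω β F x} := by
        ext x; exact hiff t _
      have hsetα : {x | t < ntMax Ω α F x ^ p} = {x | t ^ p⁻¹ < ntMax Ω α F x} := by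
        ext x; exact hiff t _
      rw [hsetβ, hsetα,
        Measure.restrict_apply
          (show MeasurableSet {x | t ^ p⁻¹ < ntMax Ω β F x} from hNβ measurableSet_Ioi),
        Measure.restrict_apply
          (show MeasurableSet {x | t ^ p⁻¹ < ntMax Ω α F x} from hNα measurableSet_Ioi)]
      exact Statement4Aux.weak_ineq hΩ hfrne hα hαβ μ hc₃.le hdbl hm F _
    have hcomp := Statement4Aux.lintegral_le_of_dist (μ.restrict (frontier Ω)) _ _
      hmeasα hmeasβ (c₃^m) hdist
    calc (∫⁻ x in frontier Ω, ntMax Ω β F x ^ p ∂μ) ^ p⁻¹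
        ≤ ((4 * c₃^m) * ∫⁻ x in frontier Ω, ntMax Ω α F x ^ p ∂μ) ^ p⁻¹ := by
          refine ENNReal.rpow_le_rpow ?_ (inv_nonneg.mpr hp.le)
          exact hcomp.trans_eq (by ring)
      _ = ((4:ℝ≥0∞) * c₃^m) ^ p⁻¹ * (∫⁻ x in frontier Ω, ntMax Ω α F x ^ p ∂μ) ^ p⁻¹ :=
          ENNReal.mul_rpow_of_nonneg _ _ (inv_nonneg.mpr hp.le)
end
end

section
/- Let 0 < α < β and let F : Ω → [0,∞] be a Borel function. If x ∈ ∂Ω satisfies S^β F(x) < ∞ and S^α F(x) > λ for some λ > 0, then there exists ε > 0 such that S^α F(y) > λ for every y ∈ ∂Ω with |y − x| < ε. In particular, if S^β F(x) < ∞ for every x ∈ ∂Ω, then for every λ > 0 the set {x ∈ ∂Ω : S^α F(x) > λ} is relatively open in ∂Ω. -/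
open Metric MeasureTheory Set
open scoped ENNReal

noncomputable section

/-- The conical square function
`S^α F(x) = (∬_{Γ^α(x)} F(Y)² δ(Y)² dm(Y)/m(B(x,δ(Y)) ∩ Ω))^{1/2}`. -/
def sqFn {n : ℕ} (Ω : Set (EuclideanSpace ℝ (Fin (n + 1))))
    (m : Measure (EuclideanSpace ℝ (Fin (n + 1)))) (α : ℝ)
    (F : EuclideanSpace ℝ (Fin (n + 1)) → ℝ≥0∞) (x : EuclideanSpace ℝ (Fin (n + 1))) :
    ℝ≥0∞ :=
  (∫⁻ Y in cone Ω α x,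
      F Y ^ 2 * ENNReal.ofReal (bdist Ω Y) ^ 2 / m (ball x (bdist Ω Y) ∩ Ω) ∂m) ^ (2⁻¹ : ℝ)

open Filter
open scoped Topology

namespace Stmt6

variable {n : ℕ} {Ω : Set (EuclideanSpace ℝ (Fin (n + 1)))}

lemma bdist_pos (hΩ : IsOpen Ω) (hfr : (frontier Ω).Nonempty)
    {Y : EuclideanSpace ℝ (Fin (n + 1))} (hY : Y ∈ Ω) : 0 < bdist Ω Y := by
  have hnot : Y ∉ frontier Ω := fun h => (hΩ.frontier_eq ▸ h).2 hY
  exact (isClosed_frontier.notMem_iff_infDist_pos hfr).mp hnot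

lemma ball_bdist_subset (hΩ : IsOpen Ω) {Y : EuclideanSpace ℝ (Fin (n + 1))}
    (hY : Y ∈ Ω) : ball Y (bdist Ω Y) ⊆ Ω := by
  rcases le_or_gt (bdist Ω Y) 0 with h | h
  · rw [ball_eq_empty.2 h]; exact empty_subset _
  · refine IsPreconnected.subset_left_of_subset_union hΩ isClosed_closure.isOpen_compl
      (disjoint_compl_right.mono_left subset_closure) ?_ ⟨Y, mem_ball_self h, hY⟩
      (convex_ball Y _).isPreconnected
    intro Z hZ
    by_cases hZΩ : Z ∈ Ω
    · exact Or.inl hZΩ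
    by_cases hZc : Z ∈ closure Ω
    · exfalso
      have hZf : Z ∈ frontier Ω := by rw [hΩ.frontier_eq]; exact ⟨hZc, hZΩ⟩
      have h1 : bdist Ω Y ≤ dist Y Z := infDist_le_dist_of_mem hZf
      rw [mem_ball, dist_comm] at hZ
      exact absurd (lt_of_le_of_lt h1 hZ) (lt_irrefl _)
    · exact Or.inr hZc

lemma porosity (hΩ : IsOpen Ω) (hfr : (frontier Ω).Nonempty)
    {Y : EuclideanSpace ℝ (Fin (n + 1))} (hY : Y ∈ Ω) {r : ℝ} (hr : 0 < r)
    (hrc : r < bdist Ω Y) :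
    ∃ Z, Z ∈ Ω ∧ ball Z (r / 8) ⊆ ball Y r ∩ Ω ∧ closedBall Y r ⊆ ball Z (2 * r) ∧
      ∀ W ∈ ball Z (r / 8), bdist Ω W < bdist Ω Y := by
  set c := bdist Ω Y with hc
  have hc0 : 0 < c := hr.trans hrc
  have hlt : infDist Y (frontier Ω) < c + r / 100 := by
    have : infDist Y (frontier Ω) = c := by rw [hc]; rfl
    rw [this]; linarith
  obtain ⟨p, hp, hdp⟩ := (infDist_lt_iff hfr).mp hlt
  have hdge : c ≤ dist Y p := infDist_le_dist_of_mem hp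
  set d := dist Y p with hd
  have hd0 : 0 < d := hc0.trans_le hdge
  set Z : EuclideanSpace ℝ (Fin (n + 1)) := Y + (r / (2 * d)) • (p - Y) with hZdef
  have hnorm : ‖p - Y‖ = d := by rw [← dist_eq_norm, dist_comm]
  have hZY : dist Z Y = r / 2 := by
    have h1 : Z - Y = (r / (2 * d)) • (p - Y) := by rw [hZdef]; abel
    rw [dist_eq_norm, h1, norm_smul, Real.norm_eq_abs, abs_of_pos (by positivity), hnorm]
    field_simp
  have hZp : dist Z p = d - r / 2 := by
    have h1 : Z - p = (r / (2 * d)) • (p - Y) - (p - Y) := by rw [hZdef]; abel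
    have h2 : (r / (2 * d)) • (p - Y) - (p - Y) = (r / (2 * d) - 1) • (p - Y) := by
      rw [sub_smul, one_smul]
    have h3 : r / (2 * d) ≤ 1 := by
      rw [div_le_one (by positivity)]; linarith
    rw [dist_eq_norm, h1, h2, norm_smul, Real.norm_eq_abs, abs_of_nonpos (by linarith), hnorm]
    field_simp; ring
  have hZmem : Z ∈ Ω := by
    apply ball_bdist_subset hΩ hY
    rw [mem_ball, hZY, ← hc]; linarith
  have hbZ : bdist Ω Z ≤ d - r / 2 := by
    rw [← hZp]; exact infDist_le_dist_of_mem hp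
  refine ⟨Z, hZmem, ?_, ?_, ?_⟩
  · intro W hW
    rw [mem_ball] at hW
    have hWY : dist W Y < r / 8 + r / 2 := by
      calc dist W Y ≤ dist W Z + dist Z Y := dist_triangle _ _ _
        _ < r / 8 + r / 2 := by rw [hZY]; linarith
    constructor
    · rw [mem_ball]; linarith
    · apply ball_bdist_subset hΩ hY
      rw [mem_ball, ← hc]; linarith
  · intro W hW
    rw [mem_closedBall] at hW
    rw [mem_ball]
    calc dist W Z ≤ dist W Y + dist Y Z := dist_triangle _ _ _
      _ ≤ r + r / 2 := by rw [dist_comm Y Z, hZY]; linarith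
      _ < 2 * r := by linarith
  · intro W hW
    rw [mem_ball] at hW
    calc bdist Ω W ≤ bdist Ω Z + dist W Z := infDist_le_infDist_add_dist
      _ < (d - r / 2) + r / 8 := by linarith
      _ < c := by linarith

lemma restrict_locallyFinite (m : Measure (EuclideanSpace ℝ (Fin (n + 1))))
    (hfin : ∀ X ∈ closure Ω, ∀ r : ℝ, 0 < r → m (ball X r ∩ Ω) < ∞) :
    IsLocallyFiniteMeasure (m.restrict Ω) := by
  constructor
  intro p
  by_cases hp : p ∈ closure Ω
  · refine ⟨ball p 1, ball_mem_nhds p one_pos, ?_⟩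
    rw [Measure.restrict_apply measurableSet_ball]
    exact hfin p hp 1 one_pos
  · refine ⟨(closure Ω)ᶜ, isClosed_closure.isOpen_compl.mem_nhds hp, ?_⟩
    rw [Measure.restrict_apply isClosed_closure.isOpen_compl.measurableSet]
    have : (closure Ω)ᶜ ∩ Ω = ∅ := by
      ext Z; simp only [mem_inter_iff, mem_compl_iff, mem_empty_iff_false, iff_false, not_and]
      exact fun h1 h2 => h1 (subset_closure h2)
    rw [this, measure_empty]
    exact ENNReal.zero_lt_top

lemma levelset_null (hΩ : IsOpen Ω) (hfr : (frontier Ω).Nonempty)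
    (m : Measure (EuclideanSpace ℝ (Fin (n + 1)))) (c₄ : ℝ≥0∞) (hc₄ : 1 ≤ c₄) (hc₄' : c₄ < ∞)
    (hm : ∀ X ∈ closure Ω, ∀ r : ℝ, 0 < r →
      0 < m (ball X r ∩ Ω) ∧ m (ball X r ∩ Ω) < ∞ ∧
        m (ball X (2 * r) ∩ Ω) ≤ c₄ * m (ball X r ∩ Ω))
    (c : ℝ) : m {Y | Y ∈ Ω ∧ bdist Ω Y = c} = 0 := by
  set E : Set (EuclideanSpace ℝ (Fin (n + 1))) := {Y | Y ∈ Ω ∧ bdist Ω Y = c} with hEdef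
  have hE : MeasurableSet E := by
    have : E = Ω ∩ (bdist Ω) ⁻¹' {c} := rfl
    rw [this]
    exact hΩ.measurableSet.inter
      ((continuous_infDist_pt (frontier Ω)).measurable (measurableSet_singleton c))
  rcases le_or_gt c 0 with hc0 | hc0
  · have : E = ∅ := by
      rw [eq_empty_iff_forall_notMem]
      rintro Y ⟨h1, h2⟩
      exact absurd (h2 ▸ bdist_pos hΩ hfr h1) (not_lt.2 hc0)
    rw [this, measure_empty]
  set μ := m.restrict Ω with hμdef
  haveI : IsLocallyFiniteMeasure μ := restrict_locallyFinite m (fun X hX r hr => (hm X hX r hr).2.1)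
  have hEsub : E ⊆ Ω := fun Y hY => hY.1
  have hμE : μ E = m E := by rw [hμdef, Measure.restrict_apply hE, inter_eq_self_of_subset_left hEsub]
  by_contra hne
  have hpos : 0 < μ E := by rw [hμE]; exact pos_iff_ne_zero.2 hne
  have hae := Besicovitch.ae_tendsto_measure_inter_div_of_measurableSet μ hE
  obtain ⟨Y, hYE, hYtd⟩ : ∃ Y ∈ E, Tendsto (fun r => μ (E ∩ closedBall Y r) / μ (closedBall Y r))
      (𝓝[>] 0) (𝓝 (E.indicator 1 Y)) := by
    by_contra h'
    push_neg at h'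
    have hnull : μ {Y | ¬ Tendsto (fun r => μ (E ∩ closedBall Y r) / μ (closedBall Y r))
        (𝓝[>] 0) (𝓝 (E.indicator 1 Y))} = 0 := ae_iff.1 hae
    have : μ E = 0 := measure_mono_null (fun Y hY => h' Y hY) hnull
    exact absurd this hpos.ne'
  rw [indicator_of_mem hYE, Pi.one_apply] at hYtd
  obtain ⟨hYΩ, hYc⟩ := hYE
  -- the porosity constant
  set κ : ℝ≥0∞ := (c₄ ^ 4)⁻¹ with hκdef
  have hc₄0 : c₄ ≠ 0 := (lt_of_lt_of_le zero_lt_one hc₄).ne'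
  have hc₄top : c₄ ^ 4 ≠ ∞ := ENNReal.pow_ne_top hc₄'.ne
  have hκ0 : κ ≠ 0 := ENNReal.inv_ne_zero.2 hc₄top
  have hκ1 : κ ≤ 1 := ENNReal.inv_le_one.2 (one_le_pow_of_one_le' hc₄ 4)
  have hκ2 : κ / 2 ≠ 0 := by
    simp only [ne_eq, ENNReal.div_eq_zero_iff, hκ0, false_or]
    exact ENNReal.ofNat_ne_top
  have hev1 : ∀ᶠ r in 𝓝[>] (0:ℝ),
      1 - κ / 2 < μ (E ∩ closedBall Y r) / μ (closedBall Y r) := by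
    exact hYtd (Ioi_mem_nhds (ENNReal.sub_lt_self ENNReal.one_ne_top one_ne_zero hκ2))
  have hev2 : Ioo (0:ℝ) c ∈ 𝓝[>] (0:ℝ) := Ioo_mem_nhdsGT_of_mem ⟨le_refl 0, hc0⟩
  obtain ⟨r, hratio, hrIoo⟩ := (hev1.and hev2).exists
  obtain ⟨hr0, hrc⟩ := hrIoo
  obtain ⟨Z, hZΩ, hZsub, hZsup, hZlt⟩ := porosity hΩ hfr hYΩ hr0 (hYc ▸ hrc)
  set a := μ (E ∩ closedBall Y r)
  set M := μ (closedBall Y r) with hMdef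
  set b := μ (ball Z (r / 8)) with hbdef
  have hbm : b = m (ball Z (r / 8) ∩ Ω) := Measure.restrict_apply measurableSet_ball
  have hb0 : 0 < b := by rw [hbm]; exact (hm Z (subset_closure hZΩ) (r / 8) (by positivity)).1
  have hbtop : b < ∞ := by rw [hbm]; exact (hm Z (subset_closure hZΩ) (r / 8) (by positivity)).2.1
  -- M ≤ c₄^4 * b
  have hM4 : M ≤ c₄ ^ 4 * b := by
    have hZcl : Z ∈ closure Ω := subset_closure hZΩ
    have e1 : m (ball Z (2 * r) ∩ Ω) ≤ c₄ * m (ball Z r ∩ Ω) := (hm Z hZcl r hr0).2.2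
    have e2 : m (ball Z r ∩ Ω) ≤ c₄ * m (ball Z (r / 2) ∩ Ω) := by
      have := (hm Z hZcl (r / 2) (by positivity)).2.2
      rwa [show 2 * (r / 2) = r by ring] at this
    have e3 : m (ball Z (r / 2) ∩ Ω) ≤ c₄ * m (ball Z (r / 4) ∩ Ω) := by
      have := (hm Z hZcl (r / 4) (by positivity)).2.2
      rwa [show 2 * (r / 4) = r / 2 by ring] at this
    have e4 : m (ball Z (r / 4) ∩ Ω) ≤ c₄ * m (ball Z (r / 8) ∩ Ω) := by
      have := (hm Z hZcl (r / 8) (by positivity)).2.2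
      rwa [show 2 * (r / 8) = r / 4 by ring] at this
    have eM : M ≤ m (ball Z (2 * r) ∩ Ω) := by
      rw [hMdef, Measure.restrict_apply measurableSet_closedBall]
      exact measure_mono (inter_subset_inter_left Ω hZsup)
    calc M ≤ m (ball Z (2 * r) ∩ Ω) := eM
      _ ≤ c₄ * m (ball Z r ∩ Ω) := e1
      _ ≤ c₄ * (c₄ * m (ball Z (r / 2) ∩ Ω)) := mul_le_mul_right e2 _
      _ ≤ c₄ * (c₄ * (c₄ * m (ball Z (r / 4) ∩ Ω))) := by
          exact mul_le_mul_right (mul_le_mul_right e3 _) _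
      _ ≤ c₄ * (c₄ * (c₄ * (c₄ * m (ball Z (r / 8) ∩ Ω)))) := by
          exact mul_le_mul_right (mul_le_mul_right (mul_le_mul_right e4 _) _) _
      _ = c₄ ^ 4 * b := by rw [hbm]; ring
  have hbM : b ≤ M := by
    apply measure_mono
    exact (hZsub.trans inter_subset_left).trans ball_subset_closedBall
  have hM0 : M ≠ 0 := fun h => by rw [h] at hbM; exact hb0.ne' (le_antisymm hbM (zero_le : (0:ℝ≥0∞) ≤ b))
  have hMtop : M ≠ ∞ := by
    refine (lt_of_le_of_lt hM4 ?_).ne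
    exact ENNReal.mul_lt_top (lt_of_le_of_ne le_top hc₄top) hbtop
  -- disjointness and a + b ≤ M
  have hdisj : Disjoint (E ∩ closedBall Y r) (ball Z (r / 8)) := by
    rw [Set.disjoint_left]
    rintro W ⟨hWE, _⟩ hWZ
    exact absurd (hWE.2 ▸ hZlt W hWZ) (by rw [hYc]; exact lt_irrefl c)
  have haM : a + b ≤ M := by
    rw [← measure_union hdisj measurableSet_ball]
    apply measure_mono
    apply union_subset inter_subset_right
    exact (hZsub.trans inter_subset_left).trans ball_subset_closedBall
  -- κ * M ≤ b
  have hκM : κ * M ≤ b := by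
    calc κ * M ≤ κ * (c₄ ^ 4 * b) := mul_le_mul_right hM4 _
      _ = (κ * c₄ ^ 4) * b := by rw [mul_assoc]
      _ = b := by
          rw [hκdef, ENNReal.inv_mul_cancel (pow_ne_zero 4 hc₄0) hc₄top, one_mul]
  have hκb : κ ≤ b / M := (ENNReal.le_div_iff_mul_le (Or.inl hM0) (Or.inl hMtop)).2 hκM
  have hfinal : a / M + κ ≤ 1 := by
    calc a / M + κ ≤ a / M + b / M := add_le_add_right hκb _
      _ = (a + b) / M := ENNReal.div_add_div_same
      _ ≤ M / M := ENNReal.div_le_div_right haM M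
      _ = 1 := ENNReal.div_self hM0 hMtop
  -- contradiction
  have hκtop : κ ≠ ∞ := (lt_of_le_of_lt hκ1 ENNReal.one_lt_top).ne
  have hh1 : (1 - κ / 2) + κ < a / M + κ := ENNReal.add_lt_add_right hκtop hratio
  have hh2 : (1 - κ / 2) + κ = 1 + κ / 2 := by
    have ht : κ = κ / 2 + κ / 2 := (ENNReal.add_halves κ).symm
    have h10 : κ / 2 ≤ 1 := le_trans ENNReal.half_le_self hκ1
    calc (1 - κ / 2) + κ = (1 - κ / 2) + (κ / 2 + κ / 2) := by rw [← ht]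
      _ = ((1 - κ / 2) + κ / 2) + κ / 2 := by rw [add_assoc]
      _ = 1 + κ / 2 := by rw [tsub_add_cancel_of_le h10]
  have hh3 : (1:ℝ≥0∞) < 1 + κ / 2 := ENNReal.lt_add_right ENNReal.one_ne_top hκ2
  have : (1:ℝ≥0∞) < 1 := lt_of_lt_of_le (lt_of_lt_of_le hh3 (hh2 ▸ hh1.le)) hfinal
  exact absurd this (lt_irrefl 1)

lemma cone_isOpen (hΩ : IsOpen Ω) (α : ℝ) (z : EuclideanSpace ℝ (Fin (n + 1))) :
    IsOpen (cone Ω α z) := by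
  have heq : cone Ω α z = Ω ∩ {Y | dist Y z < (1 + α) * bdist Ω Y} := rfl
  rw [heq]
  exact hΩ.inter (isOpen_lt (continuous_id.dist continuous_const)
    (continuous_const.mul (continuous_infDist_pt (frontier Ω))))

lemma lsc (hΩ : IsOpen Ω) (hfr : (frontier Ω).Nonempty)
    (m : Measure (EuclideanSpace ℝ (Fin (n + 1)))) (c₄ : ℝ≥0∞) (hc₄ : 1 ≤ c₄) (hc₄' : c₄ < ∞)
    (hm : ∀ X ∈ closure Ω, ∀ r : ℝ, 0 < r →
      0 < m (ball X r ∩ Ω) ∧ m (ball X r ∩ Ω) < ∞ ∧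
        m (ball X (2 * r) ∩ Ω) ≤ c₄ * m (ball X r ∩ Ω))
    (α : ℝ) (F : EuclideanSpace ℝ (Fin (n + 1)) → ℝ≥0∞) (hF : Measurable F)
    {x : EuclideanSpace ℝ (Fin (n + 1))} (hx : x ∈ frontier Ω) {l : ℝ≥0∞}
    (hl : l < sqFn Ω m α F x) :
    ∃ ε : ℝ, 0 < ε ∧ ∀ y : EuclideanSpace ℝ (Fin (n + 1)), dist y x < ε →
      l < sqFn Ω m α F y := by
  by_contra hcon
  push_neg at hcon
  have hseq : ∀ k : ℕ, ∃ y, dist y x < 1 / ((k : ℝ) + 1) ∧ sqFn Ω m α F y ≤ l := by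
    intro k
    obtain ⟨y, hd, hs⟩ := hcon (1 / ((k : ℝ) + 1)) (by positivity)
    exact ⟨y, hd, hs⟩
  choose y hy1 hy2 using hseq
  have hxcl : x ∈ closure Ω := frontier_subset_closure hx
  set N : EuclideanSpace ℝ (Fin (n + 1)) → ℝ≥0∞ :=
    fun Y => F Y ^ 2 * ENNReal.ofReal (bdist Ω Y) ^ 2 with hN
  set g : EuclideanSpace ℝ (Fin (n + 1)) → EuclideanSpace ℝ (Fin (n + 1)) → ℝ≥0∞ :=
    fun z Y => N Y / m (ball z (bdist Ω Y) ∩ Ω) with hg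
  set h : ℕ → EuclideanSpace ℝ (Fin (n + 1)) → ℝ≥0∞ :=
    fun k => (cone Ω α (y k)).indicator (g (y k)) with hh
  have hgmeas : ∀ z, Measurable (g z) := by
    intro z
    apply Measurable.div
    · exact (hF.pow_const 2).mul ((ENNReal.measurable_ofReal.comp
        (continuous_infDist_pt (frontier Ω)).measurable).pow_const 2)
    · exact (Monotone.measurable (fun r s hrs => measure_mono
        (inter_subset_inter_left Ω (ball_subset_ball hrs)))).comp
        (continuous_infDist_pt (frontier Ω)).measurable
  have hhmeas : ∀ k, Measurable (h k) :=
    fun k => (hgmeas (y k)).indicator (cone_isOpen hΩ α (y k)).measurableSet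
  have hIle : ∀ k, ∫⁻ Y, h k Y ∂m ≤ l ^ (2 : ℝ) := by
    intro k
    have h1 : ∫⁻ Y, h k Y ∂m = ∫⁻ Y in cone Ω α (y k), g (y k) Y ∂m :=
      lintegral_indicator (cone_isOpen hΩ α (y k)).measurableSet _
    have h2 : sqFn Ω m α F (y k) = (∫⁻ Y in cone Ω α (y k), g (y k) Y ∂m) ^ (2⁻¹ : ℝ) := rfl
    have h3 := ENNReal.rpow_le_rpow (h2 ▸ hy2 k) (by norm_num : (0 : ℝ) ≤ 2)
    have h4 : (∫⁻ Y in cone Ω α (y k), g (y k) Y ∂m) =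
        ((∫⁻ Y in cone Ω α (y k), g (y k) Y ∂m) ^ (2⁻¹ : ℝ)) ^ (2 : ℝ) := by
      rw [← ENNReal.rpow_mul, show (2⁻¹ * 2 : ℝ) = 1 by norm_num, ENNReal.rpow_one]
    rw [h1, h4]
    exact h3
  haveI : IsLocallyFiniteMeasure (m.restrict Ω) :=
    restrict_locallyFinite m (fun X hX r hr => (hm X hX r hr).2.1)
  have hT : Set.Countable {c : ℝ | 0 < (m.restrict Ω) (sphere x c)} := by
    apply MeasureTheory.Measure.countable_meas_pos_of_disjoint_iUnion
      (As := fun c : ℝ => sphere x c) (fun c => isClosed_sphere.measurableSet)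
    intro c c' hcc'
    simp only [Function.onFun]
    rw [Set.disjoint_left]
    intro z hz hz'
    rw [mem_sphere] at hz hz'
    exact hcc' (hz ▸ hz')
  set T := {c : ℝ | 0 < (m.restrict Ω) (sphere x c)} with hTdef
  have hBad : m (⋃ c ∈ T, {Y | Y ∈ Ω ∧ bdist Ω Y = c}) = 0 :=
    (measure_biUnion_null_iff hT).2 fun c _ => levelset_null hΩ hfr m c₄ hc₄ hc₄' hm c
  have hgood : ∀ᵐ Y ∂m, Y ∉ ⋃ c ∈ T, {Y | Y ∈ Ω ∧ bdist Ω Y = c} := by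
    have heq : {Y | ¬ Y ∉ ⋃ c ∈ T, {Y | Y ∈ Ω ∧ bdist Ω Y = c}} =
        ⋃ c ∈ T, {Y | Y ∈ Ω ∧ bdist Ω Y = c} := by
      ext z
      simp only [mem_setOf_eq, not_not]
    rw [ae_iff, heq]
    exact hBad
  have hkey : ∀ᵐ Y ∂m, (cone Ω α x).indicator (g x) Y ≤ liminf (fun k => h k Y) atTop := by
    filter_upwards [hgood] with Y hYgood
    by_cases hYc : Y ∈ cone Ω α x
    swap
    · rw [indicator_of_notMem hYc]; exact zero_le
    rw [indicator_of_mem hYc]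
    obtain ⟨hYΩ, hYlt⟩ := hYc
    have hr0 : 0 < bdist Ω Y := bdist_pos hΩ hfr hYΩ
    set r := bdist Ω Y with hrdef
    have hsph : m (sphere x r ∩ Ω) = 0 := by
      by_contra hs
      have hrT : r ∈ T := by
        rw [hTdef]
        simp only [mem_setOf_eq]
        rw [Measure.restrict_apply isClosed_sphere.measurableSet]
        exact pos_iff_ne_zero.2 hs
      exact hYgood (mem_biUnion hrT ⟨hYΩ, rfl⟩)
    have hcB : m (closedBall x r ∩ Ω) = m (ball x r ∩ Ω) := by
      apply le_antisymm
      · rw [← ball_union_sphere, union_inter_distrib_right]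
        calc m (ball x r ∩ Ω ∪ sphere x r ∩ Ω)
            ≤ m (ball x r ∩ Ω) + m (sphere x r ∩ Ω) := measure_union_le _ _
          _ = m (ball x r ∩ Ω) := by rw [hsph, add_zero]
      · exact measure_mono (inter_subset_inter_left Ω ball_subset_closedBall)
    set A : ℕ → Set (EuclideanSpace ℝ (Fin (n + 1))) :=
      fun j => ball x (r + 1 / ((j : ℝ) + 1)) ∩ Ω with hA
    have hAanti : Antitone A := by
      intro j k hjk
      apply inter_subset_inter_left
      apply ball_subset_ball
      have h1 : ((j : ℝ) + 1) ≤ ((k : ℝ) + 1) := by exact_mod_cast Nat.succ_le_succ hjk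
      have h2 := one_div_le_one_div_of_le (by positivity : (0:ℝ) < (j:ℝ) + 1) h1
      linarith
    have hAiInter : ⋂ j, A j = closedBall x r ∩ Ω := by
      ext z
      simp only [hA, mem_iInter, mem_inter_iff, mem_ball, mem_closedBall]
      constructor
      · intro hz
        refine ⟨le_of_not_gt fun hgt => ?_, (hz 0).2⟩
        obtain ⟨j, hj⟩ := exists_nat_one_div_lt (sub_pos.2 hgt)
        have := (hz j).1
        linarith
      · rintro ⟨hz1, hz2⟩ j
        exact ⟨lt_of_le_of_lt hz1 (lt_add_of_pos_right r (by positivity)), hz2⟩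
    have htendA : Tendsto (fun j => m (A j)) atTop (𝓝 (m (ball x r ∩ Ω))) := by
      have hfin0 : m (A 0) ≠ ∞ := by
        have hsub : A 0 ⊆ ball x (r + 1) ∩ Ω := by
          apply inter_subset_inter_left
          apply ball_subset_ball
          norm_num
        exact ((measure_mono hsub).trans_lt (hm x hxcl (r + 1) (by positivity)).2.1).ne
      have h1 := tendsto_measure_iInter_atTop
        (fun j => (measurableSet_ball.inter hΩ.measurableSet).nullMeasurableSet) hAanti ⟨0, hfin0⟩
      rw [hAiInter, hcB] at h1
      exact h1
    have hD0 : m (ball x r ∩ Ω) ≠ 0 := (hm x hxcl r hr0).1.ne'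
    have hDtop : m (ball x r ∩ Ω) ≠ ∞ := (hm x hxcl r hr0).2.1.ne
    by_contra hco
    push_neg at hco
    obtain ⟨a, ha1, ha2⟩ := exists_between hco
    have hex : ∃ j : ℕ, a < N Y / m (A j) := by
      by_contra hno
      push_neg at hno
      have hub : ∀ j, N Y ≤ a * m (A j) := by
        intro j
        have hsub1 : ball x r ∩ Ω ⊆ A j := by
          apply inter_subset_inter_left
          apply ball_subset_ball
          have : (0:ℝ) < 1 / ((j : ℝ) + 1) := by positivity
          linarith
        have hne0 : m (A j) ≠ 0 := fun h0 => hD0 (measure_mono_null hsub1 h0)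
        have hnetop : m (A j) ≠ ∞ := by
          have hsub2 : A j ⊆ ball x (r + 1) ∩ Ω := by
            apply inter_subset_inter_left
            apply ball_subset_ball
            have h1 : 1 / ((j : ℝ) + 1) ≤ 1 := by
              rw [div_le_one (by positivity)]
              have : (0:ℝ) ≤ (j:ℝ) := Nat.cast_nonneg j
              linarith
            linarith
          exact ((measure_mono hsub2).trans_lt (hm x hxcl (r + 1) (by positivity)).2.1).ne
        exact (ENNReal.div_le_iff_le_mul (Or.inl hne0) (Or.inl hnetop)).1 (hno j)
      have hlim2 : Tendsto (fun j => a * m (A j)) atTop (𝓝 (a * m (ball x r ∩ Ω))) :=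
        ENNReal.Tendsto.const_mul htendA (Or.inl hD0)
      have hNle : N Y ≤ a * m (ball x r ∩ Ω) := ge_of_tendsto' hlim2 hub
      have hga : g x Y ≤ a :=
        (ENNReal.div_le_iff_le_mul (Or.inl hD0) (Or.inl hDtop)).2 hNle
      exact absurd (lt_of_lt_of_le ha2 hga) (lt_irrefl a)
    obtain ⟨j, hj⟩ := hex
    have hτ : 0 < (1 + α) * r - dist Y x := by
      rw [hrdef]
      linarith
    obtain ⟨K, hK⟩ := exists_nat_one_div_lt hτ
    have hev : ∀ᶠ k in atTop, a ≤ h k Y := by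
      filter_upwards [eventually_ge_atTop K, eventually_ge_atTop j] with k hk1 hk2
      have hdK : dist (y k) x < 1 / ((K : ℝ) + 1) := by
        refine lt_of_lt_of_le (hy1 k) ?_
        have h1 : ((K : ℝ) + 1) ≤ ((k : ℝ) + 1) := by exact_mod_cast Nat.succ_le_succ hk1
        exact one_div_le_one_div_of_le (by positivity) h1
      have hconek : Y ∈ cone Ω α (y k) := by
        refine ⟨hYΩ, ?_⟩
        calc dist Y (y k) ≤ dist Y x + dist x (y k) := dist_triangle _ _ _
          _ = dist Y x + dist (y k) x := by rw [dist_comm x (y k)]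
          _ < dist Y x + ((1 + α) * r - dist Y x) := by
              have := lt_trans hdK hK
              linarith
          _ = (1 + α) * r := by ring
      have hballk : ball (y k) r ∩ Ω ⊆ A j := by
        apply inter_subset_inter_left
        intro w hw
        rw [mem_ball] at hw ⊢
        have hjk : dist (y k) x < 1 / ((j : ℝ) + 1) := by
          refine lt_of_lt_of_le (hy1 k) ?_
          have h1 : ((j : ℝ) + 1) ≤ ((k : ℝ) + 1) := by exact_mod_cast Nat.succ_le_succ hk2
          exact one_div_le_one_div_of_le (by positivity) h1
        calc dist w x ≤ dist w (y k) + dist (y k) x := dist_triangle _ _ _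
          _ < r + 1 / ((j : ℝ) + 1) := by linarith
      have hmono : m (ball (y k) r ∩ Ω) ≤ m (A j) := measure_mono hballk
      have hdiv : N Y / m (A j) ≤ N Y / m (ball (y k) r ∩ Ω) :=
        ENNReal.div_le_div_left hmono _
      have hhk : h k Y = N Y / m (ball (y k) r ∩ Ω) := by
        show (cone Ω α (y k)).indicator (g (y k)) Y = _
        rw [indicator_of_mem hconek]
      rw [hhk]
      exact le_trans hj.le hdiv
    have hle : a ≤ liminf (fun k => h k Y) atTop :=
      Filter.le_liminf_of_le (by isBoundedDefault) hev
    exact absurd hle (not_le.2 ha1)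
  have hIx : (∫⁻ Y in cone Ω α x, g x Y ∂m) ≤ l ^ (2 : ℝ) := by
    calc (∫⁻ Y in cone Ω α x, g x Y ∂m)
        = ∫⁻ Y, (cone Ω α x).indicator (g x) Y ∂m :=
          (lintegral_indicator (cone_isOpen hΩ α x).measurableSet _).symm
      _ ≤ ∫⁻ Y, liminf (fun k => h k Y) atTop ∂m := lintegral_mono_ae hkey
      _ ≤ liminf (fun k => ∫⁻ Y, h k Y ∂m) atTop := lintegral_liminf_le hhmeas
      _ ≤ l ^ (2 : ℝ) := by
          refine le_trans (Filter.liminf_le_liminf (Filter.Eventually.of_forall hIle)) ?_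
          rw [Filter.liminf_const]
  have hfin : sqFn Ω m α F x ≤ l := by
    have h2 := ENNReal.rpow_le_rpow hIx (by norm_num : (0 : ℝ) ≤ 2⁻¹)
    have h3 : ((l ^ (2 : ℝ)) ^ (2⁻¹ : ℝ)) = l := by
      rw [← ENNReal.rpow_mul, show ((2 : ℝ) * 2⁻¹) = 1 by norm_num, ENNReal.rpow_one]
    calc sqFn Ω m α F x = (∫⁻ Y in cone Ω α x, g x Y ∂m) ^ (2⁻¹ : ℝ) := rfl
      _ ≤ (l ^ (2 : ℝ)) ^ (2⁻¹ : ℝ) := h2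
      _ = l := h3
  exact absurd hl (not_lt.2 hfin)

end Stmt6

/-- lower semicontinuity-type openness of superlevel sets of the
conical square function: if `S^β F(x) < ∞` and `S^α F(x) > l` (with `α < β`),
then `S^α F > l` on a relative neighborhood of `x` in `∂Ω`; in particular, if
`S^β F < ∞` everywhere on `∂Ω`, then `{S^α F > l}` is relatively open in `∂Ω`. -/
theorem statement6 {n : ℕ} (Ω : Set (EuclideanSpace ℝ (Fin (n + 1))))
    (hΩ : IsOpen Ω) (hΩne : Ω.Nonempty) (hfr : (frontier Ω).Nonempty)
    (m : Measure (EuclideanSpace ℝ (Fin (n + 1)))) (c₄ : ℝ≥0∞) (hc₄ : 1 ≤ c₄)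
    (hc₄' : c₄ < ∞)
    -- m is doubling up to the boundary with constant c₄
    (hm : ∀ X ∈ closure Ω, ∀ r : ℝ, 0 < r →
      0 < m (ball X r ∩ Ω) ∧ m (ball X r ∩ Ω) < ∞ ∧
        m (ball X (2 * r) ∩ Ω) ≤ c₄ * m (ball X r ∩ Ω))
    (α β : ℝ) (hα : 0 < α) (hαβ : α < β)
    (F : EuclideanSpace ℝ (Fin (n + 1)) → ℝ≥0∞) (hF : Measurable F) :
    (∀ x ∈ frontier Ω, ∀ l : ℝ≥0∞, 0 < l →
      sqFn Ω m β F x < ∞ → l < sqFn Ω m α F x →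
        ∃ ε : ℝ, 0 < ε ∧ ∀ y ∈ frontier Ω, dist y x < ε → l < sqFn Ω m α F y) ∧
    ((∀ x ∈ frontier Ω, sqFn Ω m β F x < ∞) → ∀ l : ℝ≥0∞, 0 < l →
      ∃ U : Set (EuclideanSpace ℝ (Fin (n + 1))), IsOpen U ∧
        {x ∈ frontier Ω | l < sqFn Ω m α F x} = U ∩ frontier Ω) := by
  have main : ∀ x ∈ frontier Ω, ∀ l : ℝ≥0∞, l < sqFn Ω m α F x →
      ∃ ε : ℝ, 0 < ε ∧ ∀ y : EuclideanSpace ℝ (Fin (n + 1)), dist y x < ε →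
        l < sqFn Ω m α F y :=
    fun x hx l hl => Stmt6.lsc hΩ hfr m c₄ hc₄ hc₄' hm α F hF hx hl
  constructor
  · intro x hx l _ _ hlt
    obtain ⟨ε, hε, hprop⟩ := main x hx l hlt
    exact ⟨ε, hε, fun y _ hy => hprop y hy⟩
  · intro hfin l hl
    have hch : ∀ x : EuclideanSpace ℝ (Fin (n + 1)), ∃ ε : ℝ, 0 < ε ∧
        ((x ∈ frontier Ω ∧ l < sqFn Ω m α F x) →
          ∀ y, dist y x < ε → l < sqFn Ω m α F y) := by
      intro x
      by_cases hx : x ∈ frontier Ω ∧ l < sqFn Ω m α F x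
      · obtain ⟨ε, hε, hprop⟩ := main x hx.1 l hx.2
        exact ⟨ε, hε, fun _ => hprop⟩
      · exact ⟨1, one_pos, fun h => absurd h hx⟩
    choose ε hε hprop using hch
    refine ⟨⋃ x ∈ {x | x ∈ frontier Ω ∧ l < sqFn Ω m α F x}, ball x (ε x), ?_, ?_⟩
    · exact isOpen_biUnion fun x _ => isOpen_ball
    · ext z
      simp only [mem_inter_iff, mem_iUnion, mem_setOf_eq, mem_sep_iff]
      constructor
      · rintro ⟨hz1, hz2⟩
        exact ⟨⟨z, ⟨hz1, hz2⟩, mem_ball_self (hε z)⟩, hz1⟩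
      · rintro ⟨⟨x', hx', hzball⟩, hzfr⟩
        exact ⟨hzfr, hprop x' hx' z (by rwa [mem_ball] at hzball)⟩
end
end

section
/- For every α > 0 there exists a constant C_α > 1, depending only on α and the doubling constants c₃ of μ and c₄ of m, such that for every nonnegative Borel function F on Ω, every x ∈ ∂Ω and every 0 < r < diam(∂Ω), one has ∬_{B(x,r) ∩ Ω} F(X)² δ(X) ρ(X)^{-1} dm(X) ≤ C_α ∫_{Δ(x, (2+α)r)} S^α_{(1+α)r} F(y)² dμ(y). -/
open Metric MeasureTheory Set
open scoped ENNReal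

noncomputable section

/-- The square `S^α_r F(x)²` of the truncated conical square function. -/
def sqTr {n : ℕ} (Ω : Set (EuclideanSpace ℝ (Fin (n + 1))))
    (m : Measure (EuclideanSpace ℝ (Fin (n + 1)))) (α r : ℝ)
    (F : EuclideanSpace ℝ (Fin (n + 1)) → ℝ≥0∞) (x : EuclideanSpace ℝ (Fin (n + 1))) :
    ℝ≥0∞ :=
  ∫⁻ Y in cone Ω α x ∩ ball x r,
    F Y ^ 2 * ENNReal.ofReal (bdist Ω Y) ^ 2 / m (ball x (bdist Ω Y) ∩ Ω) ∂m

/-- The density ratio `ρ(X) = m(B(x̂(X),δ(X)) ∩ Ω)/(δ(X) μ(Δ(x̂(X),δ(X))))`. -/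
def densityRho {n : ℕ} (Ω : Set (EuclideanSpace ℝ (Fin (n + 1))))
    (μ m : Measure (EuclideanSpace ℝ (Fin (n + 1))))
    (xhat : EuclideanSpace ℝ (Fin (n + 1)) → EuclideanSpace ℝ (Fin (n + 1)))
    (X : EuclideanSpace ℝ (Fin (n + 1))) : ℝ≥0∞ :=
  m (ball (xhat X) (bdist Ω X) ∩ Ω) /
    (ENNReal.ofReal (bdist Ω X) * μ (ball (xhat X) (bdist Ω X) ∩ frontier Ω))

set_option maxHeartbeats 1600000 in
/-- the Carleson-type integral `∬_{B(x,r)∩Ω} F² δ ρ⁻¹ dm` is controlled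
by the `L²(μ)` integral of the truncated conical square function over an enlarged
surface ball, with a constant depending only on `α`, `c₃` and `c₄`. -/
theorem statement7 (α : ℝ) (hα : 0 < α) (c₃ c₄ : ℝ≥0∞)
    (hc₃ : 1 < c₃) (hc₃' : c₃ < ∞) (hc₄ : 1 ≤ c₄) (hc₄' : c₄ < ∞) :
    ∃ C : ℝ≥0∞, 1 < C ∧ C < ∞ ∧
      ∀ (n : ℕ) (Ω : Set (EuclideanSpace ℝ (Fin (n + 1)))),
        IsOpen Ω → Ω.Nonempty → (frontier Ω).Nonempty →
        ∀ μ m : Measure (EuclideanSpace ℝ (Fin (n + 1))),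
          -- μ is a doubling measure on ∂Ω with constant c₃
          (∀ x ∈ frontier Ω, ∀ r : ℝ, 0 < r →
            0 < μ (ball x r ∩ frontier Ω) ∧ μ (ball x r ∩ frontier Ω) < ∞ ∧
              μ (ball x (2 * r) ∩ frontier Ω) ≤ c₃ * μ (ball x r ∩ frontier Ω)) →
          -- m is doubling up to the boundary with constant c₄
          (∀ X ∈ closure Ω, ∀ r : ℝ, 0 < r →
            0 < m (ball X r ∩ Ω) ∧ m (ball X r ∩ Ω) < ∞ ∧
              m (ball X (2 * r) ∩ Ω) ≤ c₄ * m (ball X r ∩ Ω)) →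
          -- x̂ is a measurable nearest boundary point map
          ∀ xhat : EuclideanSpace ℝ (Fin (n + 1)) → EuclideanSpace ℝ (Fin (n + 1)),
            Measurable xhat →
            (∀ X ∈ Ω, xhat X ∈ frontier Ω ∧ dist X (xhat X) = bdist Ω X) →
            ∀ F : EuclideanSpace ℝ (Fin (n + 1)) → ℝ≥0∞, Measurable F →
              ∀ x ∈ frontier Ω, ∀ r : ℝ, 0 < r →
                ENNReal.ofReal r < EMetric.diam (frontier Ω) →
                ∫⁻ X in ball x r ∩ Ω,
                    F X ^ 2 * ENNReal.ofReal (bdist Ω X) * (densityRho Ω μ m xhat X)⁻¹ ∂m ≤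
                  C * ∫⁻ y in ball x ((2 + α) * r) ∩ frontier Ω,
                        sqTr Ω m α ((1 + α) * r) F y ∂μ := by
  classical
  set j : ℕ := ⌈1 / α⌉₊ + 1 with hjdef
  set k : ℕ := ⌈α⌉₊ + 1 with hkdef
  have h2j : (1 : ℝ) ≤ 2 ^ j * α := by
    have h1 : (1 : ℝ) / α ≤ (⌈1 / α⌉₊ : ℝ) := Nat.le_ceil _
    have h2 : ((⌈1 / α⌉₊ : ℕ) : ℝ) ≤ (j : ℝ) := by exact_mod_cast Nat.le_succ _
    have h3 : (j : ℝ) ≤ 2 ^ j := by exact_mod_cast (Nat.lt_two_pow_self (n := j)).le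
    have h4 : (1 : ℝ) / α ≤ 2 ^ j := by linarith
    rw [div_le_iff₀ hα] at h4
    linarith
  have h2k : (1 : ℝ) + α ≤ 2 ^ k := by
    have h1 : α ≤ (⌈α⌉₊ : ℝ) := Nat.le_ceil _
    have h2 : ((⌈α⌉₊ : ℕ) : ℝ) + 1 ≤ 2 ^ k := by
      have : (k : ℝ) ≤ 2 ^ k := by exact_mod_cast (Nat.lt_two_pow_self (n := k)).le
      push_cast [hkdef] at this ⊢
      linarith
    linarith
  have hck0 : c₄ ^ k ≠ 0 := by
    have : (1 : ℝ≥0∞) ≤ c₄ ^ k := one_le_pow₀ hc₄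
    exact fun h => by simp [h] at this
  have hcktop : c₄ ^ k ≠ ∞ := ((ENNReal.pow_lt_top hc₄' : c₄ ^ k < ∞)).ne
  have hcj0 : c₃ ^ j ≠ 0 := by
    have : (1 : ℝ≥0∞) ≤ c₃ ^ j := one_le_pow₀ hc₃.le
    exact fun h => by simp [h] at this
  have hcjtop : c₃ ^ j ≠ ∞ := ((ENNReal.pow_lt_top hc₃' : c₃ ^ j < ∞)).ne
  refine ⟨c₃ ^ j * c₄ ^ k, ?_, ?_, ?_⟩
  · calc (1 : ℝ≥0∞) < c₃ ^ j := one_lt_pow₀ hc₃ (by simp [hjdef])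
      _ = c₃ ^ j * 1 := (mul_one _).symm
      _ ≤ c₃ ^ j * c₄ ^ k := mul_le_mul_right (one_le_pow₀ hc₄) _
  · exact ENNReal.mul_lt_top ((ENNReal.pow_lt_top hc₃' : c₃ ^ j < ∞)) ((ENNReal.pow_lt_top hc₄' : c₄ ^ k < ∞))
  intro n Ω hΩopen hΩne hfrne μ m hμ hm xhat hxhatm hxhat F hF x hx r hr _
  set C : ℝ≥0∞ := c₃ ^ j * c₄ ^ k with hCdef
  have hCtop : C ≠ ∞ := (ENNReal.mul_lt_top ((ENNReal.pow_lt_top hc₃' : c₃ ^ j < ∞)) ((ENNReal.pow_lt_top hc₄' : c₄ ^ k < ∞))).ne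
  have hδcont : Continuous (bdist Ω) := continuous_infDist_pt _
  have hδmeas : Measurable (bdist Ω) := hδcont.measurable
  have hxcl : x ∈ closure Ω := frontier_subset_closure hx
  -- positivity of δ on Ω
  have hδpos : ∀ X ∈ Ω, 0 < bdist Ω X := by
    intro X hX
    have hXnot : X ∉ frontier Ω := by
      rw [hΩopen.frontier_eq]
      exact fun h => h.2 hX
    exact (isClosed_frontier.notMem_iff_infDist_pos hfrne).1 hXnot
  have hδledist : ∀ X : EuclideanSpace ℝ (Fin (n + 1)), bdist Ω X ≤ dist X x :=
    fun X => infDist_le_dist_of_mem hx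
  -- doubling iterated
  have hμiter : ∀ p ∈ frontier Ω, ∀ s : ℝ, 0 < s → ∀ i : ℕ,
      μ (ball p (2 ^ i * s) ∩ frontier Ω) ≤ c₃ ^ i * μ (ball p s ∩ frontier Ω) := by
    intro p hp s hs i
    induction i with
    | zero => simp
    | succ i ih =>
      have heq : (2 : ℝ) ^ (i + 1) * s = 2 * (2 ^ i * s) := by ring
      rw [heq, pow_succ]
      calc μ (ball p (2 * (2 ^ i * s)) ∩ frontier Ω)
          ≤ c₃ * μ (ball p (2 ^ i * s) ∩ frontier Ω) :=
            (hμ p hp _ (by positivity)).2.2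
        _ ≤ c₃ * (c₃ ^ i * μ (ball p s ∩ frontier Ω)) := mul_le_mul_right ih _
        _ = c₃ ^ i * c₃ * μ (ball p s ∩ frontier Ω) := by ring
  have hmiter : ∀ p ∈ closure Ω, ∀ s : ℝ, 0 < s → ∀ i : ℕ,
      m (ball p (2 ^ i * s) ∩ Ω) ≤ c₄ ^ i * m (ball p s ∩ Ω) := by
    intro p hp s hs i
    induction i with
    | zero => simp
    | succ i ih =>
      have heq : (2 : ℝ) ^ (i + 1) * s = 2 * (2 ^ i * s) := by ring
      rw [heq, pow_succ]
      calc m (ball p (2 * (2 ^ i * s)) ∩ Ω)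
          ≤ c₄ * m (ball p (2 ^ i * s) ∩ Ω) := (hm p hp _ (by positivity)).2.2
        _ ≤ c₄ * (c₄ ^ i * m (ball p s ∩ Ω)) := mul_le_mul_right ih _
        _ = c₄ ^ i * c₄ * m (ball p s ∩ Ω) := by ring
  set E : Set (EuclideanSpace ℝ (Fin (n + 1))) := ball x r ∩ Ω with hEdef
  set Δ' : Set (EuclideanSpace ℝ (Fin (n + 1))) := ball x ((2 + α) * r) ∩ frontier Ω
    with hΔdef
  set μ' := μ.restrict Δ' with hμ'def
  set m' := m.restrict E with hm'def
  haveI hμ'fin : IsFiniteMeasure μ' := by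
    constructor
    rw [hμ'def, Measure.restrict_apply_univ]
    exact (hμ x hx _ (by positivity)).2.1
  haveI hm'fin : IsFiniteMeasure m' := by
    constructor
    rw [hm'def, Measure.restrict_apply_univ]
    exact (hm x hxcl r hr).2.1
  haveI hmΩsf : SigmaFinite (m.restrict Ω) := by
    refine ⟨⟨⟨fun i => ball x i, fun _ => trivial, fun i => ?_, iUnion_ball_nat x⟩⟩⟩
    rw [Measure.restrict_apply measurableSet_ball]
    rcases Nat.eq_zero_or_pos i with h | h
    · simp [h]
    · exact (hm x hxcl i (by exact_mod_cast h)).2.1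
  -- measurability kernel
  have hker : ∀ (ν : Measure (EuclideanSpace ℝ (Fin (n + 1)))), SFinite ν →
      Measurable (fun a : EuclideanSpace ℝ (Fin (n + 1)) × ℝ => ν (ball a.1 a.2)) := by
    intro ν hν
    have hS : MeasurableSet
        {q : (EuclideanSpace ℝ (Fin (n + 1)) × ℝ) × EuclideanSpace ℝ (Fin (n + 1)) |
          dist q.2 q.1.1 < q.1.2} :=
      measurableSet_lt (measurable_snd.dist measurable_fst.fst) measurable_fst.snd
    exact measurable_measure_prodMk_left hS
  have hmB : Measurable fun X => m (ball (xhat X) (bdist Ω X) ∩ Ω) := by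
    have h1 := (hker (m.restrict Ω) inferInstance).comp (hxhatm.prodMk hδmeas)
    simpa [Function.comp_def, Measure.restrict_apply measurableSet_ball] using h1
  set g : EuclideanSpace ℝ (Fin (n + 1)) → ℝ≥0∞ := fun X =>
    F X ^ 2 * ENNReal.ofReal (bdist Ω X) ^ 2 / m (ball (xhat X) (bdist Ω X) ∩ Ω) with hgdef
  have hg : Measurable g :=
    ((hF.pow_const 2).mul ((ENNReal.measurable_ofReal.comp hδmeas).pow_const 2)).div hmB
  -- the product kernel
  set f : EuclideanSpace ℝ (Fin (n + 1)) × EuclideanSpace ℝ (Fin (n + 1)) → ℝ≥0∞ :=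
    fun p => if dist p.1 (xhat p.2) < α * bdist Ω p.2 then g p.2 / c₄ ^ k else 0 with hfdef
  have hfmeas : Measurable f := by
    have hset : MeasurableSet {p : EuclideanSpace ℝ (Fin (n + 1)) ×
        EuclideanSpace ℝ (Fin (n + 1)) | dist p.1 (xhat p.2) < α * bdist Ω p.2} :=
      measurableSet_lt (measurable_fst.dist (hxhatm.comp measurable_snd))
        (measurable_const.mul (hδmeas.comp measurable_snd))
    exact Measurable.ite hset ((hg.comp measurable_snd).div measurable_const) measurable_const
  -- inner y-integral computation
  have hinner : ∀ X, ∫⁻ y, f (y, X) ∂μ' =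
      g X / c₄ ^ k * μ' (ball (xhat X) (α * bdist Ω X)) := by
    intro X
    have heq : (fun y => f (y, X)) =
        (ball (xhat X) (α * bdist Ω X)).indicator (fun _ => g X / c₄ ^ k) := by
      funext y
      simp only [hfdef, Set.indicator_apply, mem_ball]
    rw [heq, lintegral_indicator measurableSet_ball, setLIntegral_const]
  -- step A : for every y, the X-integral of the kernel is below sqTr
  have hstepA : ∀ y, ∫⁻ X, f (y, X) ∂m' ≤ sqTr Ω m α ((1 + α) * r) F y := by
    intro y
    set T : Set (EuclideanSpace ℝ (Fin (n + 1))) :=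
      {X | dist y (xhat X) < α * bdist Ω X} with hTdef
    have hT : MeasurableSet T :=
      measurableSet_lt (measurable_const.dist hxhatm) (measurable_const.mul hδmeas)
    have h1 : ∫⁻ X, f (y, X) ∂m' = ∫⁻ X in T ∩ E, g X / c₄ ^ k ∂m := by
      have heq : (fun X => f (y, X)) = T.indicator (fun X => g X / c₄ ^ k) := by
        funext X
        simp only [hfdef, hTdef, Set.indicator_apply, mem_setOf_eq]
      rw [heq, lintegral_indicator hT, hm'def, Measure.restrict_restrict hT]
    rw [h1]
    -- on T ∩ E the kernel is dominated by the sqTr integrand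
    have hbigmeas : Measurable fun X =>
        F X ^ 2 * ENNReal.ofReal (bdist Ω X) ^ 2 / m (ball y (bdist Ω X) ∩ Ω) := by
      have h2 := (hker (m.restrict Ω) inferInstance).comp
        ((measurable_const (a := y)).prodMk hδmeas)
      refine ((hF.pow_const 2).mul
        ((ENNReal.measurable_ofReal.comp hδmeas).pow_const 2)).div ?_
      simpa [Function.comp_def, Measure.restrict_apply measurableSet_ball] using h2
    have hsub : T ∩ E ⊆ cone Ω α y ∩ ball y ((1 + α) * r) := by
      rintro X ⟨hXT, hXE⟩
      have hXΩ : X ∈ Ω := hXE.2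
      have hδX : 0 < bdist Ω X := hδpos X hXΩ
      have hdxhat : dist X (xhat X) = bdist Ω X := (hxhat X hXΩ).2
      have hd1 : dist X y < (1 + α) * bdist Ω X := by
        have h3 : dist X y ≤ dist X (xhat X) + dist (xhat X) y := dist_triangle _ _ _
        have h4' : dist y (xhat X) < α * bdist Ω X := hXT
        have h4 : dist (xhat X) y < α * bdist Ω X := by rwa [dist_comm] at h4'
        rw [hdxhat] at h3; linarith
      have hδXr : bdist Ω X < r := lt_of_le_of_lt (hδledist X) hXE.1
      refine ⟨⟨hXΩ, hd1⟩, ?_⟩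
      rw [mem_ball]
      calc dist X y < (1 + α) * bdist Ω X := hd1
        _ < (1 + α) * r := by nlinarith
    have hptwise : ∀ X ∈ T ∩ E, g X / c₄ ^ k ≤
        F X ^ 2 * ENNReal.ofReal (bdist Ω X) ^ 2 / m (ball y (bdist Ω X) ∩ Ω) := by
      rintro X ⟨hXT, hXE⟩
      have hXΩ : X ∈ Ω := hXE.2
      have hδX : 0 < bdist Ω X := hδpos X hXΩ
      have hdenom : m (ball y (bdist Ω X) ∩ Ω) ≤
          c₄ ^ k * m (ball (xhat X) (bdist Ω X) ∩ Ω) := by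
        have hball : ball y (bdist Ω X) ⊆ ball (xhat X) (2 ^ k * bdist Ω X) := by
          intro z hz
          rw [mem_ball] at hz ⊢
          have h5 : dist z (xhat X) ≤ dist z y + dist y (xhat X) := dist_triangle _ _ _
          have h6 : dist y (xhat X) < α * bdist Ω X := hXT
          nlinarith
        calc m (ball y (bdist Ω X) ∩ Ω)
            ≤ m (ball (xhat X) (2 ^ k * bdist Ω X) ∩ Ω) :=
              measure_mono (inter_subset_inter_left _ hball)
          _ ≤ c₄ ^ k * m (ball (xhat X) (bdist Ω X) ∩ Ω) :=
              hmiter (xhat X) (frontier_subset_closure (hxhat X hXΩ).1) _ hδX k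
      calc g X / c₄ ^ k
          = F X ^ 2 * ENNReal.ofReal (bdist Ω X) ^ 2 /
              (c₄ ^ k * m (ball (xhat X) (bdist Ω X) ∩ Ω)) := by
            rw [hgdef]
            simp only
            rw [div_eq_mul_inv, div_eq_mul_inv, div_eq_mul_inv,
              ENNReal.mul_inv (Or.inl hck0) (Or.inl hcktop)]
            ring
        _ ≤ F X ^ 2 * ENNReal.ofReal (bdist Ω X) ^ 2 / m (ball y (bdist Ω X) ∩ Ω) :=
            ENNReal.div_le_div_left hdenom _
    calc ∫⁻ X in T ∩ E, g X / c₄ ^ k ∂m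
        ≤ ∫⁻ X in T ∩ E,
            F X ^ 2 * ENNReal.ofReal (bdist Ω X) ^ 2 / m (ball y (bdist Ω X) ∩ Ω) ∂m :=
          setLIntegral_mono hbigmeas hptwise
      _ ≤ ∫⁻ X in cone Ω α y ∩ ball y ((1 + α) * r),
            F X ^ 2 * ENNReal.ofReal (bdist Ω X) ^ 2 / m (ball y (bdist Ω X) ∩ Ω) ∂m :=
          lintegral_mono_set hsub
      _ = sqTr Ω m α ((1 + α) * r) F y := rfl
  -- step C : pointwise bound on E for the LHS integrand
  have hstepC : ∀ X ∈ E,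
      F X ^ 2 * ENNReal.ofReal (bdist Ω X) * (densityRho Ω μ m xhat X)⁻¹ ≤
        C * (g X / c₄ ^ k * μ' (ball (xhat X) (α * bdist Ω X))) := by
    intro X hXE
    have hXΩ : X ∈ Ω := hXE.2
    have hδX : 0 < bdist Ω X := hδpos X hXΩ
    obtain ⟨hp, hdp⟩ := hxhat X hXΩ
    set p := xhat X
    set d := bdist Ω X with hddef
    have hδXr : d < r := lt_of_le_of_lt (hδledist X) hXE.1
    have hμΔpos := (hμ p hp d hδX).1
    have hμΔtop := (hμ p hp d hδX).2.1
    have hmBpos := (hm p (frontier_subset_closure hp) d hδX).1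
    have hmBtop := (hm p (frontier_subset_closure hp) d hδX).2.1
    -- the inverse of densityRho
    have hrho : (densityRho Ω μ m xhat X)⁻¹ =
        ENNReal.ofReal d * μ (ball p d ∩ frontier Ω) / m (ball p d ∩ Ω) := by
      rw [densityRho, ENNReal.inv_div (Or.inr hmBtop.ne) (Or.inr hmBpos.ne')]
    -- ball p (α d) lands inside ball x ((2+α) r)
    have hballsub : ball p (α * d) ⊆ ball x ((2 + α) * r) := by
      intro z hz
      rw [mem_ball] at hz ⊢
      have h7 : dist z x ≤ dist z p + dist p x := dist_triangle _ _ _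
      have h8 : dist p x ≤ dist p X + dist X x := dist_triangle _ _ _
      have h9 : dist p X = d := by rw [dist_comm]; exact hdp
      have h10 : dist X x < r := hXE.1
      nlinarith
    have hμ'ball : μ' (ball p (α * d)) = μ (ball p (α * d) ∩ frontier Ω) := by
      rw [hμ'def, Measure.restrict_apply measurableSet_ball, hΔdef]
      congr 1
      rw [← inter_assoc]
      congr 1
      exact inter_eq_left.mpr hballsub
    have hμdbl : μ (ball p d ∩ frontier Ω) ≤ c₃ ^ j * μ' (ball p (α * d)) := by
      rw [hμ'ball]
      calc μ (ball p d ∩ frontier Ω)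
          ≤ μ (ball p (2 ^ j * (α * d)) ∩ frontier Ω) := by
            apply measure_mono
            apply inter_subset_inter_left
            apply ball_subset_ball
            nlinarith
        _ ≤ c₃ ^ j * μ (ball p (α * d) ∩ frontier Ω) :=
            hμiter p hp (α * d) (by positivity) j
    -- now put it together
    rw [hrho]
    have hgX : C * (g X / c₄ ^ k * μ' (ball p (α * d))) =
        c₃ ^ j * g X * μ' (ball p (α * d)) := by
      rw [hCdef]
      have : c₃ ^ j * c₄ ^ k * (g X / c₄ ^ k * μ' (ball p (α * d))) =
          c₃ ^ j * (c₄ ^ k * (g X / c₄ ^ k)) * μ' (ball p (α * d)) := by ring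
      rw [this, ENNReal.mul_div_cancel hck0 hcktop]
    rw [hgX, hgdef]
    simp only
    calc F X ^ 2 * ENNReal.ofReal d * (ENNReal.ofReal d * μ (ball p d ∩ frontier Ω) /
          m (ball p d ∩ Ω))
        = F X ^ 2 * ENNReal.ofReal d ^ 2 * (m (ball p d ∩ Ω))⁻¹ *
            μ (ball p d ∩ frontier Ω) := by
          rw [div_eq_mul_inv]; ring
      _ ≤ F X ^ 2 * ENNReal.ofReal d ^ 2 * (m (ball p d ∩ Ω))⁻¹ *
            (c₃ ^ j * μ' (ball p (α * d))) := mul_le_mul_right hμdbl _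
      _ = c₃ ^ j * (F X ^ 2 * ENNReal.ofReal d ^ 2 / m (ball p d ∩ Ω)) *
            μ' (ball p (α * d)) := by
          rw [div_eq_mul_inv]; ring
  -- measurability of the upper bound in step C
  have hμ'ballmeas : Measurable fun X => μ' (ball (xhat X) (α * bdist Ω X)) := by
    have H := (hker μ' inferInstance).comp (hxhatm.prodMk (hδmeas.const_mul α))
    simpa [Function.comp_def] using H
  have hUmeas : Measurable fun X =>
      C * (g X / c₄ ^ k * μ' (ball (xhat X) (α * bdist Ω X))) :=
    measurable_const.mul ((hg.div measurable_const).mul hμ'ballmeas)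
  -- main chain
  calc ∫⁻ X in ball x r ∩ Ω,
        F X ^ 2 * ENNReal.ofReal (bdist Ω X) * (densityRho Ω μ m xhat X)⁻¹ ∂m
      ≤ ∫⁻ X in E, C * (g X / c₄ ^ k * μ' (ball (xhat X) (α * bdist Ω X))) ∂m :=
        setLIntegral_mono hUmeas hstepC
    _ = C * ∫⁻ X in E, g X / c₄ ^ k * μ' (ball (xhat X) (α * bdist Ω X)) ∂m :=
        lintegral_const_mul' _ _ hCtop
    _ = C * ∫⁻ X, ∫⁻ y, f (y, X) ∂μ' ∂m' := by
        rw [hm'def]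
        congr 1
        exact (lintegral_congr fun X => (hinner X).symm)
    _ = C * ∫⁻ y, ∫⁻ X, f (y, X) ∂m' ∂μ' := by
        congr 1
        exact (lintegral_lintegral_swap (hfmeas.aemeasurable)).symm
    _ ≤ C * ∫⁻ y, sqTr Ω m α ((1 + α) * r) F y ∂μ' :=
        mul_le_mul_right (lintegral_mono hstepA) _
    _ = C * ∫⁻ y in ball x ((2 + α) * r) ∩ frontier Ω,
          sqTr Ω m α ((1 + α) * r) F y ∂μ := rfl
end
end

section
/- Let n ≥ 1, 0 < d < n, let Γ ⊂ ℝ^{n+1} be a nonempty closed d-ADR set with constant C₁ ≥ 1, let γ ∈ (n−d−1, n−d+1), and let m(A) := ∫_A dist(Y, Γ)^{−γ} dY. Then there exists C ≥ 1, depending only on n, d, γ and C₁, such that: (i) C^{-1} r^{n+1} dist(X, Γ)^{−γ} ≤ m(B(X,r)) ≤ C r^{n+1} dist(X, Γ)^{−γ} whenever X ∈ ℝ^{n+1} and 0 < 2r < dist(X, Γ); and (ii) m(B(X,2r)) ≤ C m(B(X,r)) for all X ∈ ℝ^{n+1} and r > 0; in particular m is a doubling measure on ℝ^{n+1}. -/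
open Metric MeasureTheory Set
open scoped ENNReal

noncomputable section

/-- The measure `m(A) = ∫_A dist(Y,Γ)^{-γ} dY`. -/
def distWeightMeasure {n : ℕ} (Γ : Set (EuclideanSpace ℝ (Fin (n + 1)))) (γ : ℝ)
    (A : Set (EuclideanSpace ℝ (Fin (n + 1)))) : ℝ≥0∞ :=
  ∫⁻ Y in A, ENNReal.ofReal (Metric.infDist Y Γ ^ (-γ))

abbrev Eucl (n : ℕ) := EuclideanSpace ℝ (Fin (n+1))

def omegaR (n : ℕ) : ℝ := (volume (ball (0 : Eucl n) 1)).toReal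

lemma omegaR_pos (n : ℕ) : 0 < omegaR n :=
  ENNReal.toReal_pos (measure_ball_pos _ _ one_pos).ne' measure_ball_lt_top.ne

lemma vol_ball (n : ℕ) (x : Eucl n) {r : ℝ} (hr : 0 ≤ r) :
    volume (ball x r) = ENNReal.ofReal (omegaR n * r ^ ((n:ℝ)+1)) := by
  rw [Measure.addHaar_ball volume x hr,
    show ((n:ℝ)+1) = ((n+1 : ℕ) : ℝ) by push_cast; ring, Real.rpow_natCast]
  rw [show volume (ball (0:Eucl n) 1) = ENNReal.ofReal (omegaR n) from
    (ENNReal.ofReal_toReal measure_ball_lt_top.ne).symm]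
  rw [← ENNReal.ofReal_mul (by positivity), finrank_euclideanSpace_fin, mul_comm]

lemma weight_measurable (n : ℕ) (Γ : Set (Eucl n)) (γ : ℝ) :
    Measurable (fun Y : Eucl n => ENNReal.ofReal (Metric.infDist Y Γ ^ (-γ))) := by
  have hw : (fun Y : Eucl n => infDist Y Γ ^ (-γ)) =
      fun Y => if infDist Y Γ = 0 then (0:ℝ) ^ (-γ)
        else Real.exp (Real.log (infDist Y Γ) * (-γ)) := by
    funext Y; by_cases h : infDist Y Γ = 0
    · simp [h]
    · have hpos : 0 < infDist Y Γ := lt_of_le_of_ne infDist_nonneg (Ne.symm h)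
      simp [h, Real.rpow_def_of_pos hpos]
  have hd : Measurable (fun Y : Eucl n => infDist Y Γ) :=
    (continuous_infDist_pt Γ).measurable
  refine Measurable.ennreal_ofReal ?_
  rw [hw]
  exact Measurable.ite (hd (measurableSet_singleton 0)) measurable_const
    (((Real.measurable_log.comp hd).mul_const _).exp)

/-- maximal ρ-separated subset -/
lemma exists_maximal_sep {α : Type*} [MetricSpace α] (T : Set α) {ρ : ℝ} (hρ : 0 < ρ) :
    ∃ S ⊆ T, (S.Pairwise fun x y => ρ ≤ dist x y) ∧ ∀ t ∈ T, ∃ s ∈ S, dist t s < ρ := by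
  set 𝒜 : Set (Set α) := {S | S ⊆ T ∧ S.Pairwise fun x y => ρ ≤ dist x y} with h𝒜
  have hch : ∀ c ⊆ 𝒜, IsChain (· ⊆ ·) c → c.Nonempty → ∃ ub ∈ 𝒜, ∀ s ∈ c, s ⊆ ub := by
    intro c hc hchain _
    refine ⟨⋃₀ c, ⟨?_, ?_⟩, fun s hs => subset_sUnion_of_mem hs⟩
    · exact sUnion_subset fun s hs => (hc hs).1
    · intro x hx y hy hxy
      obtain ⟨A, hA, hxA⟩ := hx
      obtain ⟨B, hB, hyB⟩ := hy
      rcases hchain.total hA hB with h | h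
      · exact (hc hB).2 (h hxA) hyB hxy
      · exact (hc hA).2 hxA (h hyB) hxy
  obtain ⟨S, -, hmax⟩ := zorn_subset_nonempty 𝒜 hch ∅ ⟨empty_subset _, pairwise_empty _⟩
  refine ⟨S, hmax.prop.1, hmax.prop.2, ?_⟩
  intro t ht
  by_contra h
  push_neg at h
  have htS : t ∉ S := fun hts => by
    have := h t hts; rw [dist_self] at this; exact absurd this (not_le.2 hρ)
  have hins : insert t S ∈ 𝒜 := by
    refine ⟨insert_subset ht hmax.prop.1, ?_⟩
    refine (fun (H : ∀ b ∈ S, t ≠ b → ρ ≤ dist t b) => hmax.prop.2.insert fun b hb hne => ⟨H b hb hne, by rw [dist_comm]; exact H b hb hne⟩) ?_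
    intro s hs _
    exact h s hs
  exact htS (hmax.le_of_ge hins (subset_insert t S) (mem_insert t S))

/-- counting separated points by measure -/
lemma sep_count {α : Type*} [MetricSpace α] [MeasurableSpace α] [OpensMeasurableSpace α]
    (ν : Measure α) (S : Set α) (t a b : ℝ) (ha : 0 < a) (hb : 0 ≤ b)
    (hsep : S.Pairwise fun x y => t + t ≤ dist x y)
    (hlow : ∀ s ∈ S, ENNReal.ofReal a ≤ ν (ball s t))
    (U : Set α) (hsub : ∀ s ∈ S, ball s t ⊆ U) (hU : ν U ≤ ENNReal.ofReal b) :
    ∃ F : Finset α, (↑F = S) ∧ (F.card : ℝ) * a ≤ b := by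
  have key : ∀ F : Finset α, ↑F ⊆ S → (F.card : ℝ) * a ≤ b := by
    intro F hF
    have hdisj : (↑F : Set α).PairwiseDisjoint (fun s => ball s t) := by
      intro x hx y hy hxy
      exact ball_disjoint_ball (hsep (hF hx) (hF hy) hxy)
    have h1 : (F.card : ℝ≥0∞) * ENNReal.ofReal a ≤ ENNReal.ofReal b := by
      calc (F.card : ℝ≥0∞) * ENNReal.ofReal a
          = ∑ s ∈ F, ENNReal.ofReal a := by rw [Finset.sum_const, nsmul_eq_mul]
        _ ≤ ∑ s ∈ F, ν (ball s t) := Finset.sum_le_sum fun s hs => hlow s (hF hs)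
        _ = ν (⋃ s ∈ F, ball s t) :=
            (measure_biUnion_finset hdisj fun s _ => measurableSet_ball).symm
        _ ≤ ν U := measure_mono (iUnion₂_subset fun s hs => hsub s (hF hs))
        _ ≤ ENNReal.ofReal b := hU
    rw [show ((F.card : ℝ≥0∞) * ENNReal.ofReal a) = ENNReal.ofReal (F.card * a) by
      rw [ENNReal.ofReal_mul (by positivity), ENNReal.ofReal_natCast]] at h1
    exact (ENNReal.ofReal_le_ofReal_iff hb).1 h1
  have hfin : S.Finite := by
    by_contra hinf
    obtain ⟨T', hT'S, hT'fin, hT'card⟩ :=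
      Set.Infinite.exists_subset_ncard_eq hinf (⌈b / a⌉₊ + 1)
    have hcard := key hT'fin.toFinset (by rw [hT'fin.coe_toFinset]; exact hT'S)
    rw [show hT'fin.toFinset.card = ⌈b / a⌉₊ + 1 by
      rw [← Set.ncard_coe_finset, hT'fin.coe_toFinset]; exact hT'card] at hcard
    have : b / a < (⌈b / a⌉₊ + 1 : ℝ) := lt_of_le_of_lt (Nat.le_ceil _) (by push_cast; linarith)
    rw [div_lt_iff₀ ha] at this
    push_cast at hcard
    linarith
  refine ⟨hfin.toFinset, hfin.coe_toFinset, ?_⟩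
  exact key _ (by rw [hfin.coe_toFinset])

def IsADR (n : ℕ) (d C₁ : ℝ) (Γ : Set (Eucl n)) : Prop :=
  ∀ x ∈ Γ, ∀ r : ℝ, 0 < r → ENNReal.ofReal r < EMetric.diam Γ →
    ENNReal.ofReal (C₁⁻¹ * r ^ d) ≤ μH[d] (Γ ∩ ball x r) ∧
      μH[d] (Γ ∩ ball x r) ≤ ENNReal.ofReal (C₁ * r ^ d)

lemma global_mass (n : ℕ) {d C₁ : ℝ} (hd0 : 0 < d) (hC₁ : 1 ≤ C₁) {Γ : Set (Eucl n)}
    (hne : Γ.Nonempty) (hADR : IsADR n d C₁ Γ) {D : ℝ} (hD0 : 0 < D)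
    (hD : EMetric.diam Γ = ENNReal.ofReal D) :
    μH[d] Γ ≤ ENNReal.ofReal ((16:ℝ)^((n:ℝ)+1) * C₁ * (D/4) ^ d) := by
  obtain ⟨p, hp⟩ := hne
  obtain ⟨S, hST, hsep, hcov⟩ := exists_maximal_sep Γ (ρ := D/4) (by positivity)
  have hdistD : ∀ x ∈ Γ, dist x p ≤ D := by
    intro x hx
    have h1 : edist x p ≤ ENNReal.ofReal D := hD ▸ EMetric.edist_le_diam_of_mem hx hp
    rw [edist_dist] at h1
    exact (ENNReal.ofReal_le_ofReal_iff hD0.le).1 h1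
  obtain ⟨F, hFS, hcount⟩ := sep_count volume S (D/8)
      (omegaR n * (D/8) ^ ((n:ℝ)+1)) (omegaR n * (2*D) ^ ((n:ℝ)+1))
      (mul_pos (omegaR_pos n) (by positivity)) (mul_pos (omegaR_pos n) (by positivity)).le
      (fun x hx y hy hxy => by
        have := hsep hx hy hxy; dsimp only; linarith)
      (fun s _ => le_of_eq (vol_ball n s (by positivity)).symm)
      (ball p (2*D))
      (fun s hs x hx => by
        have h1 : dist x s < D/8 := mem_ball.1 hx
        have h2 : dist s p ≤ D := hdistD s (hST hs)
        have : dist x p < 2*D := lt_of_le_of_lt (dist_triangle x s p) (by linarith)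
        exact mem_ball.2 this)
      (le_of_eq (vol_ball n p (by positivity)))
  have hcard : (F.card : ℝ) ≤ (16:ℝ)^((n:ℝ)+1) := by
    have h2 : (2*D : ℝ) ^ ((n:ℝ)+1) = (16:ℝ)^((n:ℝ)+1) * (D/8) ^ ((n:ℝ)+1) := by
      rw [← Real.mul_rpow (by norm_num) (by positivity), show (16:ℝ)*(D/8) = 2*D by ring]
    rw [h2] at hcount
    have h3 : (0:ℝ) < omegaR n * (D/8) ^ ((n:ℝ)+1) :=
      mul_pos (omegaR_pos n) (by positivity)
    have h4 : (F.card : ℝ) * (omegaR n * (D/8) ^ ((n:ℝ)+1)) ≤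
        (16:ℝ)^((n:ℝ)+1) * (omegaR n * (D/8) ^ ((n:ℝ)+1)) := hcount.trans_eq (by ring)
    exact le_of_mul_le_mul_right h4 h3
  have hsub2 : Γ ⊆ ⋃ s ∈ F, Γ ∩ ball s (D/4) := by
    intro x hx
    obtain ⟨s, hs, hds⟩ := hcov x hx
    exact mem_iUnion₂.2 ⟨s, by rw [← hFS] at hs; exact_mod_cast hs, hx, mem_ball.2 hds⟩
  calc μH[d] Γ ≤ μH[d] (⋃ s ∈ F, Γ ∩ ball s (D/4)) := measure_mono hsub2
    _ ≤ ∑ s ∈ F, μH[d] (Γ ∩ ball s (D/4)) := measure_biUnion_finset_le F _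
    _ ≤ ∑ s ∈ F, ENNReal.ofReal (C₁ * (D/4) ^ d) := by
        refine Finset.sum_le_sum fun s hs => ?_
        have hsΓ : s ∈ Γ := hST (hFS ▸ (Finset.mem_coe.2 hs))
        refine (hADR s hsΓ (D/4) (by positivity) ?_).2
        rw [hD]
        exact (ENNReal.ofReal_lt_ofReal_iff hD0).2 (by linarith)
    _ = ENNReal.ofReal ((F.card : ℝ) * (C₁ * (D/4) ^ d)) := by
        rw [Finset.sum_const, nsmul_eq_mul, ← ENNReal.ofReal_natCast F.card,
          ← ENNReal.ofReal_mul (by positivity)]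
    _ ≤ ENNReal.ofReal ((16:ℝ)^((n:ℝ)+1) * C₁ * (D/4) ^ d) := by
        apply ENNReal.ofReal_le_ofReal
        have : (0:ℝ) ≤ C₁ * (D/4) ^ d := by positivity
        nlinarith [hcard]

/-- volume of a set covered by finitely many 2ρ-balls, count bounded by b/a -/
lemma cover_vol (n : ℕ) {F : Finset (Eucl n)} {ρ a b : ℝ} (hρ : 0 < ρ) (ha : 0 < a)
    (hcount : (F.card : ℝ) * a ≤ b) {T : Set (Eucl n)}
    (hcov : T ⊆ ⋃ s ∈ F, ball s (2*ρ)) :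
    volume T ≤ ENNReal.ofReal (omegaR n * 2^((n:ℝ)+1) * ρ^((n:ℝ)+1) * (b/a)) := by
  calc volume T ≤ volume (⋃ s ∈ F, ball s (2*ρ)) := measure_mono hcov
    _ ≤ ∑ s ∈ F, volume (ball s (2*ρ)) := measure_biUnion_finset_le F _
    _ = ENNReal.ofReal ((F.card : ℝ) * (omegaR n * (2*ρ) ^ ((n:ℝ)+1))) := by
        rw [Finset.sum_congr rfl fun s _ => vol_ball n s (by positivity)]
        rw [Finset.sum_const, nsmul_eq_mul, ← ENNReal.ofReal_natCast F.card,
          ← ENNReal.ofReal_mul (by positivity)]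
    _ ≤ ENNReal.ofReal (omegaR n * 2^((n:ℝ)+1) * ρ^((n:ℝ)+1) * (b/a)) := by
        apply ENNReal.ofReal_le_ofReal
        have h1 : (F.card : ℝ) ≤ b / a := (le_div_iff₀ ha).2 hcount
        have h2 : (2*ρ:ℝ) ^ ((n:ℝ)+1) = 2^((n:ℝ)+1) * ρ^((n:ℝ)+1) :=
          Real.mul_rpow (by norm_num) hρ.le
        have h3 : (0:ℝ) ≤ omegaR n * (2*ρ) ^ ((n:ℝ)+1) := by
          have := omegaR_pos n; positivity
        calc (F.card : ℝ) * (omegaR n * (2*ρ) ^ ((n:ℝ)+1))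
            ≤ (b/a) * (omegaR n * (2*ρ) ^ ((n:ℝ)+1)) := mul_le_mul_of_nonneg_right h1 h3
          _ = omegaR n * 2^((n:ℝ)+1) * ρ^((n:ℝ)+1) * (b/a) := by rw [h2]; ring

def tubeC (n : ℕ) (d C₁ : ℝ) : ℝ :=
  omegaR n * (3:ℝ)^((n:ℝ)+1)
  + omegaR n * 2^((n:ℝ)+1) * 16^((n:ℝ)+1) * C₁^2 * 9^d
  + omegaR n * 2^((n:ℝ)+1) * C₁^2 * 3^d * 2^d

lemma tubeC_pos (n : ℕ) {d C₁ : ℝ} (hC₁ : 1 ≤ C₁) : 0 < tubeC n d C₁ := by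
  have := omegaR_pos n
  have h1 : (0:ℝ) < C₁ := by linarith
  unfold tubeC; positivity

lemma tube_bound (n : ℕ) {d C₁ : ℝ} (hd0 : 0 < d) (hdn1 : d < (n:ℝ)+1) (hC₁ : 1 ≤ C₁)
    {Γ : Set (Eucl n)} (hcl : IsClosed Γ) (hne : Γ.Nonempty) (hADR : IsADR n d C₁ Γ)
    {p : Eucl n} (hp : p ∈ Γ) {ρ R : ℝ} (hρ : 0 < ρ) (hρR : ρ ≤ R) :
    volume ({Y : Eucl n | infDist Y Γ ≤ ρ} ∩ ball p R) ≤
      ENNReal.ofReal (tubeC n d C₁ * ρ ^ (((n:ℝ)+1)-d) * R ^ d) := by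
  have hω := omegaR_pos n
  have hC₀ : (0:ℝ) < C₁ := by linarith
  have hR : (0:ℝ) < R := lt_of_lt_of_le hρ hρR
  have hz : ∀ Y ∈ {Y : Eucl n | infDist Y Γ ≤ ρ} ∩ ball p R, ∃ z ∈ Γ, dist Y z ≤ ρ := by
    intro Y hY
    obtain ⟨z, hzΓ, hzd⟩ := hcl.exists_infDist_eq_dist hne Y
    exact ⟨z, hzΓ, hzd ▸ hY.1⟩
  -- the generic final step: from a case bound with constant c ≤ tubeC
  have final : ∀ c : ℝ, 0 ≤ c → c ≤ tubeC n d C₁ →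
      volume ({Y : Eucl n | infDist Y Γ ≤ ρ} ∩ ball p R) ≤
        ENNReal.ofReal (c * ρ ^ (((n:ℝ)+1)-d) * R ^ d) →
      volume ({Y : Eucl n | infDist Y Γ ≤ ρ} ∩ ball p R) ≤
        ENNReal.ofReal (tubeC n d C₁ * ρ ^ (((n:ℝ)+1)-d) * R ^ d) := by
    intro c _ hc h
    refine h.trans (ENNReal.ofReal_le_ofReal ?_)
    have : (0:ℝ) ≤ ρ ^ (((n:ℝ)+1)-d) * R ^ d := by positivity
    nlinarith
  have hρd : ρ ^ (((n:ℝ)+1)-d) * ρ ^ d = ρ ^ ((n:ℝ)+1) := by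
    rw [← Real.rpow_add hρ]; ring_nf
  rcases le_or_gt (EMetric.diam Γ) (ENNReal.ofReal ρ) with hcase | hcase1
  · -- case (a) : tiny Γ
    have t2 : (0:ℝ) ≤ omegaR n * 2^((n:ℝ)+1) * 16^((n:ℝ)+1) * C₁^2 * 9^d :=
      mul_nonneg (mul_nonneg (mul_nonneg (mul_nonneg hω.le (by positivity)) (by positivity))
        (by positivity)) (by positivity)
    have t3 : (0:ℝ) ≤ omegaR n * 2^((n:ℝ)+1) * C₁^2 * 3^d * 2^d :=
      mul_nonneg (mul_nonneg (mul_nonneg (mul_nonneg hω.le (by positivity)) (by positivity))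
        (by positivity)) (by positivity)
    have t1 : (0:ℝ) ≤ omegaR n * (3:ℝ)^((n:ℝ)+1) := mul_nonneg hω.le (by positivity)
    refine final (omegaR n * (3:ℝ)^((n:ℝ)+1)) t1 (by unfold tubeC; linarith) ?_
    have hsub : {Y : Eucl n | infDist Y Γ ≤ ρ} ∩ ball p R ⊆ ball p (3*ρ) := by
      intro Y hY
      obtain ⟨z, hzΓ, hzd⟩ := hz Y hY
      have hzp : dist z p ≤ ρ := by
        have h1 : edist z p ≤ ENNReal.ofReal ρ :=
          le_trans (EMetric.edist_le_diam_of_mem hzΓ hp) hcase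
        rw [edist_dist] at h1
        exact (ENNReal.ofReal_le_ofReal_iff hρ.le).1 h1
      have : dist Y p < 3*ρ := by
        have := dist_triangle Y z p; linarith
      exact mem_ball.2 this
    calc volume ({Y : Eucl n | infDist Y Γ ≤ ρ} ∩ ball p R) ≤ volume (ball p (3*ρ)) :=
          measure_mono hsub
      _ = ENNReal.ofReal (omegaR n * (3*ρ) ^ ((n:ℝ)+1)) := vol_ball n p (by positivity)
      _ ≤ ENNReal.ofReal (omegaR n * (3:ℝ)^((n:ℝ)+1) * ρ ^ (((n:ℝ)+1)-d) * R ^ d) := by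
          apply ENNReal.ofReal_le_ofReal
          rw [Real.mul_rpow (by norm_num) hρ.le]
          have h4 : ρ ^ d ≤ R ^ d := Real.rpow_le_rpow hρ.le hρR hd0.le
          have h5 : (0:ℝ) < ρ ^ (((n:ℝ)+1)-d) := Real.rpow_pos_of_pos hρ _
          have h6 : (0:ℝ) < (3:ℝ)^((n:ℝ)+1) := Real.rpow_pos_of_pos (by norm_num) _
          calc omegaR n * ((3:ℝ)^((n:ℝ)+1) * ρ ^ ((n:ℝ)+1))
              = omegaR n * (3:ℝ)^((n:ℝ)+1) * (ρ ^ (((n:ℝ)+1)-d) * ρ ^ d) := by rw [hρd]; ring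
            _ ≤ omegaR n * (3:ℝ)^((n:ℝ)+1) * (ρ ^ (((n:ℝ)+1)-d) * R ^ d) := by
                apply mul_le_mul_of_nonneg_left _ (by positivity)
                exact mul_le_mul_of_nonneg_left h4 h5.le
            _ = omegaR n * (3:ℝ)^((n:ℝ)+1) * ρ ^ (((n:ℝ)+1)-d) * R ^ d := by ring
  · -- Γ not tiny
    have ha : (0:ℝ) < C₁⁻¹ * (ρ/2)^d := by positivity
    -- algebra helpers
    have e1 : ρ^((n:ℝ)+1) * ((2:ℝ)/ρ)^d = 2^d * ρ^(((n:ℝ)+1)-d) := by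
      rw [Real.div_rpow (by norm_num) hρ.le, Real.rpow_sub hρ]
      field_simp
    have hainv : ∀ u : ℝ, u / (C₁⁻¹ * (ρ/2)^d) = u * C₁ * ((2:ℝ)/ρ)^d := by
      intro u
      rw [show ((2:ℝ)/ρ)^d = ((ρ/2)^d)⁻¹ by
        rw [← Real.inv_rpow (by positivity), inv_div]]
      field_simp
    have t1 : (0:ℝ) ≤ omegaR n * (3:ℝ)^((n:ℝ)+1) := mul_nonneg hω.le (by positivity)
    have t2 : (0:ℝ) ≤ omegaR n * 2^((n:ℝ)+1) * 16^((n:ℝ)+1) * C₁^2 * 9^d :=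
      mul_nonneg (mul_nonneg (mul_nonneg (mul_nonneg hω.le (by positivity)) (by positivity))
        (by positivity)) (by positivity)
    have t3 : (0:ℝ) ≤ omegaR n * 2^((n:ℝ)+1) * C₁^2 * 3^d * 2^d :=
      mul_nonneg (mul_nonneg (mul_nonneg (mul_nonneg hω.le (by positivity)) (by positivity))
        (by positivity)) (by positivity)
    rcases lt_or_ge (ENNReal.ofReal (9*R)) (EMetric.diam Γ) with hbig | hsmall
    · -- case (c) : Γ large compared with R
      obtain ⟨S, hST, hsep, hcov⟩ := exists_maximal_sep (Γ ∩ ball p (2*R)) hρ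
      have hSΓ : S ⊆ Γ := fun s hs => (hST hs).1
      obtain ⟨F, hFS, hcount⟩ := sep_count (μH[d].restrict Γ) S (ρ/2)
        (C₁⁻¹ * (ρ/2)^d) (C₁ * (3*R)^d) ha (by positivity)
        (fun x hx y hy hxy => by
          have := hsep hx hy hxy; dsimp only; linarith)
        (fun s hs => by
          rw [Measure.restrict_apply measurableSet_ball, inter_comm]
          exact (hADR s (hSΓ hs) (ρ/2) (by positivity)
            (lt_of_le_of_lt (ENNReal.ofReal_le_ofReal (by linarith)) hbig)).1)
        (ball p (3*R))
        (fun s hs x hx => by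
          have h1 : dist x s < ρ/2 := mem_ball.1 hx
          have h2 : dist s p < 2*R := mem_ball.1 (hST hs).2
          exact mem_ball.2 (lt_of_le_of_lt (dist_triangle x s p) (by linarith)))
        (by
          rw [Measure.restrict_apply measurableSet_ball, inter_comm]
          exact (hADR p hp (3*R) (by positivity)
            (lt_of_le_of_lt (ENNReal.ofReal_le_ofReal (by linarith)) hbig)).2)
      have hcov2 : {Y : Eucl n | infDist Y Γ ≤ ρ} ∩ ball p R ⊆ ⋃ s ∈ F, ball s (2*ρ) := by
        intro Y hY
        obtain ⟨z, hzΓ, hzd⟩ := hz Y hY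
        have hzT : z ∈ Γ ∩ ball p (2*R) := by
          refine ⟨hzΓ, mem_ball.2 ?_⟩
          have h1 : dist Y p < R := mem_ball.1 hY.2
          have h2 := dist_triangle z Y p
          rw [dist_comm z Y] at h2
          linarith
        obtain ⟨s, hsS, hds⟩ := hcov z hzT
        refine mem_iUnion₂.2 ⟨s, by rw [← hFS] at hsS; exact_mod_cast hsS, mem_ball.2 ?_⟩
        have := dist_triangle Y z s
        linarith
      refine final (omegaR n * 2^((n:ℝ)+1) * C₁^2 * 3^d * 2^d) t3 (by unfold tubeC; linarith) ?_
      refine (cover_vol n hρ ha hcount hcov2).trans (ENNReal.ofReal_le_ofReal ?_)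
      rw [hainv]
      have e2 : (3*R:ℝ)^d = 3^d * R^d := Real.mul_rpow (by norm_num) hR.le
      calc omegaR n * 2^((n:ℝ)+1) * ρ^((n:ℝ)+1) * (C₁ * (3*R)^d * C₁ * ((2:ℝ)/ρ)^d)
          = omegaR n * 2^((n:ℝ)+1) * C₁^2 * (3*R)^d * (ρ^((n:ℝ)+1) * ((2:ℝ)/ρ)^d) := by ring
        _ = omegaR n * 2^((n:ℝ)+1) * C₁^2 * 3^d * 2^d * ρ^(((n:ℝ)+1)-d) * R^d := by
            rw [e1, e2]; ring
        _ ≤ omegaR n * 2^((n:ℝ)+1) * C₁^2 * 3^d * 2^d * ρ^(((n:ℝ)+1)-d) * R^d := le_rfl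
    · -- case (b) : intermediate Γ
      have hfin : EMetric.diam Γ ≠ ⊤ := by
        intro h
        rw [h] at hsmall
        exact absurd hsmall (not_le.2 ENNReal.ofReal_lt_top)
      set D := (EMetric.diam Γ).toReal with hDdef
      have hD : EMetric.diam Γ = ENNReal.ofReal D := (ENNReal.ofReal_toReal hfin).symm
      have hρD : ρ < D := by
        by_contra hcon
        push_neg at hcon
        exact absurd hcase1 (not_lt.2 (hD ▸ ENNReal.ofReal_le_ofReal hcon))
      have hD0 : (0:ℝ) < D := hρ.trans hρD
      have hD9 : D ≤ 9*R := by
        rw [hD] at hsmall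
        exact (ENNReal.ofReal_le_ofReal_iff (by linarith)).1 hsmall
      obtain ⟨S, hSΓ, hsep, hcov⟩ := exists_maximal_sep Γ hρ
      obtain ⟨F, hFS, hcount⟩ := sep_count (μH[d].restrict Γ) S (ρ/2)
        (C₁⁻¹ * (ρ/2)^d) ((16:ℝ)^((n:ℝ)+1) * C₁ * (D/4)^d) ha (by positivity)
        (fun x hx y hy hxy => by
          have := hsep hx hy hxy; dsimp only; linarith)
        (fun s hs => by
          rw [Measure.restrict_apply measurableSet_ball, inter_comm]
          exact (hADR s (hSΓ hs) (ρ/2) (by positivity)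
            (lt_of_lt_of_le ((ENNReal.ofReal_lt_ofReal_iff hρ).2 (by linarith)) hcase1.le)).1)
        univ (fun s _ => subset_univ _)
        (by
          rw [Measure.restrict_apply_univ]
          exact global_mass n hd0 hC₁ hne hADR hD0 hD)
      have hcov2 : {Y : Eucl n | infDist Y Γ ≤ ρ} ∩ ball p R ⊆ ⋃ s ∈ F, ball s (2*ρ) := by
        intro Y hY
        obtain ⟨z, hzΓ, hzd⟩ := hz Y hY
        obtain ⟨s, hsS, hds⟩ := hcov z hzΓ
        refine mem_iUnion₂.2 ⟨s, by rw [← hFS] at hsS; exact_mod_cast hsS, mem_ball.2 ?_⟩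
        have := dist_triangle Y z s
        linarith
      refine final (omegaR n * 2^((n:ℝ)+1) * 16^((n:ℝ)+1) * C₁^2 * 9^d) t2
        (by unfold tubeC; linarith) ?_
      refine (cover_vol n hρ ha hcount hcov2).trans (ENNReal.ofReal_le_ofReal ?_)
      rw [hainv]
      have e3 : (2:ℝ)^d * (D/4)^d = (D/2)^d := by
        rw [← Real.mul_rpow (by norm_num) (by positivity), show (2:ℝ)*(D/4) = D/2 by ring]
      have e4 : (D/2:ℝ)^d ≤ (9:ℝ)^d * R^d := by
        rw [← Real.mul_rpow (by norm_num) hR.le]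
        exact Real.rpow_le_rpow (by positivity) (by linarith) hd0.le
      have e5 : (0:ℝ) ≤ omegaR n * 2^((n:ℝ)+1) * 16^((n:ℝ)+1) * C₁^2 * ρ^(((n:ℝ)+1)-d) :=
        mul_nonneg (mul_nonneg (mul_nonneg (mul_nonneg hω.le (by positivity)) (by positivity))
          (by positivity)) (by positivity)
      calc omegaR n * 2^((n:ℝ)+1) * ρ^((n:ℝ)+1) * ((16:ℝ)^((n:ℝ)+1) * C₁ * (D/4)^d * C₁ * ((2:ℝ)/ρ)^d)
          = omegaR n * 2^((n:ℝ)+1) * 16^((n:ℝ)+1) * C₁^2 * ρ^(((n:ℝ)+1)-d) * ((2:ℝ)^d * (D/4)^d) := by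
            rw [show omegaR n * 2^((n:ℝ)+1) * ρ^((n:ℝ)+1) * ((16:ℝ)^((n:ℝ)+1) * C₁ * (D/4)^d * C₁ * ((2:ℝ)/ρ)^d) = omegaR n * 2^((n:ℝ)+1) * 16^((n:ℝ)+1) * C₁^2 * (D/4)^d * (ρ^((n:ℝ)+1) * ((2:ℝ)/ρ)^d) by ring, e1]
            ring
        _ = omegaR n * 2^((n:ℝ)+1) * 16^((n:ℝ)+1) * C₁^2 * ρ^(((n:ℝ)+1)-d) * (D/2)^d := by
            rw [e3]
        _ ≤ omegaR n * 2^((n:ℝ)+1) * 16^((n:ℝ)+1) * C₁^2 * ρ^(((n:ℝ)+1)-d) * ((9:ℝ)^d * R^d) :=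
            mul_le_mul_of_nonneg_left e4 e5
        _ = omegaR n * 2^((n:ℝ)+1) * 16^((n:ℝ)+1) * C₁^2 * 9^d * ρ^(((n:ℝ)+1)-d) * R^d := by
            ring

lemma dwm_mono {n : ℕ} (Γ : Set (Eucl n)) (γ : ℝ) {A B : Set (Eucl n)} (h : A ⊆ B) :
    distWeightMeasure Γ γ A ≤ distWeightMeasure Γ γ B :=
  lintegral_mono' (Measure.restrict_mono h le_rfl) le_rfl

lemma dwm_union {n : ℕ} (Γ : Set (Eucl n)) (γ : ℝ) (A B : Set (Eucl n)) :
    distWeightMeasure Γ γ (A ∪ B) ≤ distWeightMeasure Γ γ A + distWeightMeasure Γ γ B :=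
  le_trans (lintegral_mono' (Measure.restrict_union_le A B) le_rfl)
    (le_of_eq (lintegral_add_measure _ _ _))

lemma dwm_iUnion {n : ℕ} (Γ : Set (Eucl n)) (γ : ℝ) (A : ℕ → Set (Eucl n)) :
    distWeightMeasure Γ γ (⋃ k, A k) ≤ ∑' k, distWeightMeasure Γ γ (A k) :=
  le_trans (lintegral_mono' Measure.restrict_iUnion_le le_rfl)
    (le_of_eq (lintegral_sum_measure _ _))

lemma dwm_le_const {n : ℕ} (Γ : Set (Eucl n)) (γ : ℝ) {A : Set (Eucl n)} {c : ℝ}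
    (h : ∀ Y ∈ A, infDist Y Γ ^ (-γ) ≤ c) :
    distWeightMeasure Γ γ A ≤ ENNReal.ofReal c * volume A := by
  calc distWeightMeasure Γ γ A ≤ ∫⁻ _ in A, ENNReal.ofReal c := by
        exact setLIntegral_mono measurable_const fun Y hY =>
          ENNReal.ofReal_le_ofReal (h Y hY)
    _ = ENNReal.ofReal c * volume A := by rw [setLIntegral_const]

lemma dwm_ge_const {n : ℕ} (Γ : Set (Eucl n)) (γ : ℝ) {A : Set (Eucl n)} {c : ℝ}
    (h : ∀ Y ∈ A, c ≤ infDist Y Γ ^ (-γ)) :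
    ENNReal.ofReal c * volume A ≤ distWeightMeasure Γ γ A := by
  calc ENNReal.ofReal c * volume A = ∫⁻ _ in A, ENNReal.ofReal c := by rw [setLIntegral_const]
    _ ≤ distWeightMeasure Γ γ A :=
        setLIntegral_mono (weight_measurable n Γ γ) fun Y hY =>
          ENNReal.ofReal_le_ofReal (h Y hY)

def upC (n : ℕ) (d C₁ γ : ℝ) : ℝ :=
  tubeC n d C₁ * 2^γ * (1 - (2:ℝ)^(-(((n:ℝ)+1)-d-γ)))⁻¹ + omegaR n

lemma near_upper (n : ℕ) {d C₁ γ : ℝ} (hd0 : 0 < d) (hdn1 : d < (n:ℝ)+1) (hC₁ : 1 ≤ C₁)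
    (hγ2 : γ < ((n:ℝ)+1)-d)
    {Γ : Set (Eucl n)} (hcl : IsClosed Γ) (hne : Γ.Nonempty) (hADR : IsADR n d C₁ Γ)
    {p : Eucl n} (hp : p ∈ Γ) {R : ℝ} (hR : 0 < R) :
    distWeightMeasure Γ γ (ball p R) ≤ ENNReal.ofReal (upC n d C₁ γ * R ^ (((n:ℝ)+1)-γ)) := by
  have hω := omegaR_pos n
  have htC := tubeC_pos n (d := d) hC₁
  set β : ℝ := ((n:ℝ)+1)-d-γ with hβdef
  have hβ : 0 < β := by simp only [hβdef]; linarith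
  set θ : ℝ := (2:ℝ)^(-β) with hθdef
  have hθ0 : 0 < θ := Real.rpow_pos_of_pos (by norm_num) _
  have hθ1 : θ < 1 := Real.rpow_lt_one_of_one_lt_of_neg (by norm_num) (by linarith)
  have hup0 : 0 ≤ tubeC n d C₁ * 2^γ * (1-θ)⁻¹ := by
    have h2γ : (0:ℝ) < (2:ℝ)^γ := Real.rpow_pos_of_pos (by norm_num) _
    have : (0:ℝ) < (1-θ)⁻¹ := by
      apply inv_pos.2; linarith
    positivity
  rcases le_or_gt γ 0 with hγneg | hγpos
  · -- γ ≤ 0 : direct bound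
    have hbd : ∀ Y ∈ ball p R, infDist Y Γ ^ (-γ) ≤ R ^ (-γ) := by
      intro Y hY
      have h1 : infDist Y Γ ≤ R := le_trans (infDist_le_dist_of_mem hp) (mem_ball.1 hY).le
      exact Real.rpow_le_rpow infDist_nonneg h1 (by linarith)
    calc distWeightMeasure Γ γ (ball p R)
        ≤ ENNReal.ofReal (R ^ (-γ)) * volume (ball p R) := dwm_le_const Γ γ hbd
      _ = ENNReal.ofReal (R ^ (-γ) * (omegaR n * R ^ ((n:ℝ)+1))) := by
          rw [vol_ball n p hR.le, ← ENNReal.ofReal_mul (by positivity)]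
      _ ≤ ENNReal.ofReal (upC n d C₁ γ * R ^ (((n:ℝ)+1)-γ)) := by
          apply ENNReal.ofReal_le_ofReal
          have e1 : R ^ (-γ) * (omegaR n * R ^ ((n:ℝ)+1)) = omegaR n * R ^ (((n:ℝ)+1)-γ) := by
            rw [show (((n:ℝ)+1)-γ) = (-γ) + ((n:ℝ)+1) by ring,
              Real.rpow_add hR (-γ) ((n:ℝ)+1)]
            ring
          rw [e1]
          unfold upC
          have h2 : (0:ℝ) < R ^ (((n:ℝ)+1)-γ) := Real.rpow_pos_of_pos hR _
          nlinarith
  · -- γ > 0 : annuli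
    set q : ℝ := (2:ℝ)⁻¹ with hqdef
    have hq0 : (0:ℝ) < q := by norm_num
    have hq1 : q < 1 := by norm_num
    set A : ℕ → Set (Eucl n) := fun k =>
      {Y : Eucl n | Y ∈ ball p R ∧ q^(k+1) * R < infDist Y Γ ∧ infDist Y Γ ≤ q^k * R}
      with hAdef
    have hcover : ball p R ⊆ Γ ∪ ⋃ k, A k := by
      intro Y hY
      by_cases hYΓ : Y ∈ Γ
      · exact Or.inl hYΓ
      · refine Or.inr ?_
        have ht0 : 0 < infDist Y Γ := (hcl.notMem_iff_infDist_pos hne).1 hYΓ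
        have htR : infDist Y Γ < R := lt_of_le_of_lt (infDist_le_dist_of_mem hp) (mem_ball.1 hY)
        obtain ⟨k0, hk0⟩ := exists_pow_lt_of_lt_one (div_pos ht0 hR) hq1
        have hP : q^(k0+1) * R < infDist Y Γ := by
          have h1 : q^(k0+1) ≤ q^k0 := pow_le_pow_of_le_one hq0.le hq1.le (Nat.le_succ k0)
          have h2 : q^k0 * R < infDist Y Γ := (lt_div_iff₀ hR).1 hk0
          exact lt_of_le_of_lt (mul_le_mul_of_nonneg_right h1 hR.le) h2
        have hex : ∃ k, q^(k+1) * R < infDist Y Γ := ⟨k0, hP⟩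
        set k := Nat.find hex with hkdef
        have hk1 : q^(k+1) * R < infDist Y Γ := Nat.find_spec hex
        have hk2 : infDist Y Γ ≤ q^k * R := by
          rcases Nat.eq_zero_or_pos k with hk0' | hk0'
          · rw [hk0']; simpa using htR.le
          · have := Nat.find_min hex (Nat.sub_lt hk0' one_pos)
            push_neg at this
            have hkk : k - 1 + 1 = k := Nat.succ_pred_eq_of_pos hk0'
            rwa [hkk] at this
        exact mem_iUnion.2 ⟨k, hY, hk1, hk2⟩
    have hΓ0 : distWeightMeasure Γ γ Γ = 0 := by
      have h1 : ∀ Y ∈ Γ, infDist Y Γ ^ (-γ) ≤ 0 := by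
        intro Y hY
        rw [infDist_zero_of_mem hY, Real.zero_rpow (by intro h; apply hγpos.ne'; linarith)]
      have := dwm_le_const Γ γ h1
      simpa using this
    have hAk : ∀ k : ℕ, distWeightMeasure Γ γ (A k) ≤
        ENNReal.ofReal ((tubeC n d C₁ * 2^γ * R ^ (((n:ℝ)+1)-γ)) * θ^k) := by
      intro k
      have hak0 : (0:ℝ) < q^(k+1) * R := by positivity
      have hwbd : ∀ Y ∈ A k, infDist Y Γ ^ (-γ) ≤ (q^(k+1) * R) ^ (-γ) :=
        fun Y hY => Real.rpow_le_rpow_of_nonpos hak0 hY.2.1.le (by linarith)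
      have hsub : A k ⊆ {Y : Eucl n | infDist Y Γ ≤ q^k * R} ∩ ball p R :=
        fun Y hY => ⟨hY.2.2, hY.1⟩
      have hvol : volume (A k) ≤
          ENNReal.ofReal (tubeC n d C₁ * (q^k * R) ^ (((n:ℝ)+1)-d) * R ^ d) :=
        le_trans (measure_mono hsub)
          (tube_bound n hd0 hdn1 hC₁ hcl hne hADR hp (by positivity)
            (by nlinarith [pow_le_one₀ hq0.le hq1.le (n := k)]))
      calc distWeightMeasure Γ γ (A k)
          ≤ ENNReal.ofReal ((q^(k+1) * R) ^ (-γ)) * volume (A k) := dwm_le_const Γ γ hwbd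
        _ ≤ ENNReal.ofReal ((q^(k+1) * R) ^ (-γ)) *
              ENNReal.ofReal (tubeC n d C₁ * (q^k * R) ^ (((n:ℝ)+1)-d) * R ^ d) :=
            mul_le_mul' le_rfl hvol
        _ = ENNReal.ofReal ((q^(k+1) * R) ^ (-γ) *
              (tubeC n d C₁ * (q^k * R) ^ (((n:ℝ)+1)-d) * R ^ d)) := by
            rw [← ENNReal.ofReal_mul (by positivity)]
        _ = ENNReal.ofReal ((tubeC n d C₁ * 2^γ * R ^ (((n:ℝ)+1)-γ)) * θ^k) := by
            congr 1
            -- rpow algebra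
            have hc : ∀ (j:ℕ) (e:ℝ), ((q^j : ℝ)) ^ e = q ^ ((j:ℝ)*e) := by
              intro j e
              rw [← Real.rpow_natCast q j, ← Real.rpow_mul hq0.le]
            have e1 : (q^(k+1) * R) ^ (-γ) = q ^ (((k:ℝ)+1)*(-γ)) * R ^ (-γ) := by
              rw [Real.mul_rpow (by positivity) hR.le, hc]
              push_cast
              ring_nf
            have e2 : (q^k * R) ^ (((n:ℝ)+1)-d) =
                q ^ ((k:ℝ)*(((n:ℝ)+1)-d)) * R ^ (((n:ℝ)+1)-d) := by
              rw [Real.mul_rpow (by positivity) hR.le, hc]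
            have e3 : R ^ (-γ) * R ^ (((n:ℝ)+1)-d) * R ^ d = R ^ (((n:ℝ)+1)-γ) := by
              rw [← Real.rpow_add hR, ← Real.rpow_add hR]
              congr 1
              ring
            have e4 : q ^ (((k:ℝ)+1)*(-γ)) * q ^ ((k:ℝ)*(((n:ℝ)+1)-d)) =
                (2:ℝ)^γ * θ^k := by
              rw [← Real.rpow_add hq0]
              have e5 : ((k:ℝ)+1)*(-γ) + (k:ℝ)*(((n:ℝ)+1)-d) = (-γ) + (k:ℝ)*β := by
                simp only [hβdef]; ring
              rw [e5, Real.rpow_add hq0]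
              congr 1
              · rw [hqdef, Real.inv_rpow (by norm_num), ← Real.rpow_neg (by norm_num)]
                ring_nf
              · rw [hθdef, show (2:ℝ)^(-β) = q^β by
                  rw [hqdef, Real.inv_rpow (by norm_num), ← Real.rpow_neg (by norm_num)]]
                rw [← Real.rpow_natCast (q^β) k, ← Real.rpow_mul hq0.le]
                ring_nf
            calc (q^(k+1) * R) ^ (-γ) * (tubeC n d C₁ * (q^k * R) ^ (((n:ℝ)+1)-d) * R ^ d)
                = tubeC n d C₁ * (q ^ (((k:ℝ)+1)*(-γ)) * q ^ ((k:ℝ)*(((n:ℝ)+1)-d))) *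
                    (R ^ (-γ) * R ^ (((n:ℝ)+1)-d) * R ^ d) := by
                  rw [e1, e2]; ring
              _ = (tubeC n d C₁ * 2^γ * R ^ (((n:ℝ)+1)-γ)) * θ^k := by
                  rw [e3, e4]; ring
    calc distWeightMeasure Γ γ (ball p R)
        ≤ distWeightMeasure Γ γ (Γ ∪ ⋃ k, A k) := dwm_mono Γ γ hcover
      _ ≤ distWeightMeasure Γ γ Γ + distWeightMeasure Γ γ (⋃ k, A k) := dwm_union Γ γ _ _
      _ ≤ 0 + ∑' k, distWeightMeasure Γ γ (A k) := by
          rw [hΓ0]; exact add_le_add le_rfl (dwm_iUnion Γ γ A)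
      _ ≤ ∑' k : ℕ, ENNReal.ofReal ((tubeC n d C₁ * 2^γ * R ^ (((n:ℝ)+1)-γ)) * θ^k) := by
          rw [zero_add]; exact ENNReal.tsum_le_tsum hAk
      _ = ENNReal.ofReal (tubeC n d C₁ * 2^γ * R ^ (((n:ℝ)+1)-γ)) *
            (1 - ENNReal.ofReal θ)⁻¹ := by
          have : ∀ k : ℕ, ENNReal.ofReal ((tubeC n d C₁ * 2^γ * R ^ (((n:ℝ)+1)-γ)) * θ^k) =
              ENNReal.ofReal (tubeC n d C₁ * 2^γ * R ^ (((n:ℝ)+1)-γ)) * (ENNReal.ofReal θ)^k := by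
            intro k
            rw [ENNReal.ofReal_mul (by positivity), ENNReal.ofReal_pow hθ0.le]
          rw [tsum_congr this, ENNReal.tsum_mul_left, ENNReal.tsum_geometric]
      _ ≤ ENNReal.ofReal (upC n d C₁ γ * R ^ (((n:ℝ)+1)-γ)) := by
          rw [show (1 : ℝ≥0∞) - ENNReal.ofReal θ = ENNReal.ofReal (1-θ) by
              rw [ENNReal.ofReal_sub _ hθ0.le, ENNReal.ofReal_one],
            ← ENNReal.ofReal_inv_of_pos (by linarith),
            ← ENNReal.ofReal_mul (by positivity)]
          apply ENNReal.ofReal_le_ofReal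
          unfold upC
          have h2 : (0:ℝ) < R ^ (((n:ℝ)+1)-γ) := Real.rpow_pos_of_pos hR _
          nlinarith

/-- min/max bounds for t ↦ t^(-γ) on an interval -/
lemma rpow_bounds {γ a b t : ℝ} (ha : 0 < a) (hat : a ≤ t) (htb : t ≤ b) :
    min (a^(-γ)) (b^(-γ)) ≤ t^(-γ) ∧ t^(-γ) ≤ max (a^(-γ)) (b^(-γ)) := by
  rcases le_or_gt γ 0 with hγ | hγ
  · constructor
    · exact le_trans (min_le_left _ _) (Real.rpow_le_rpow ha.le hat (by linarith))
    · exact le_trans (Real.rpow_le_rpow (ha.trans_le hat).le htb (by linarith))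
        (le_max_right _ _)
  · constructor
    · exact le_trans (min_le_right _ _)
        (Real.rpow_le_rpow_of_nonpos (ha.trans_le hat) htb (by linarith))
    · exact le_trans (Real.rpow_le_rpow_of_nonpos ha hat (by linarith)) (le_max_left _ _)

def epsC (n : ℕ) (d C₁ : ℝ) : ℝ :=
  min 1 ((omegaR n / (2 * tubeC n d C₁ * 9^d)) ^ (((n:ℝ)+1-d))⁻¹)

lemma epsC_pos (n : ℕ) {d C₁ : ℝ} (hC₁ : 1 ≤ C₁) : 0 < epsC n d C₁ := by
  have h1 : (0:ℝ) < omegaR n / (2 * tubeC n d C₁ * 9^d) :=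
    div_pos (omegaR_pos n) (mul_pos (mul_pos two_pos (tubeC_pos n hC₁))
      (Real.rpow_pos_of_pos (by norm_num) d))
  exact lt_min one_pos (Real.rpow_pos_of_pos h1 _)

def lowC (n : ℕ) (d C₁ γ : ℝ) : ℝ :=
  min ((epsC n d C₁)^(-γ)) ((9:ℝ)^(-γ)) * (omegaR n / 2)

lemma lowC_pos (n : ℕ) {d C₁ : ℝ} (γ : ℝ) (hC₁ : 1 ≤ C₁) : 0 < lowC n d C₁ γ :=
  mul_pos (lt_min (Real.rpow_pos_of_pos (epsC_pos n hC₁) _)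
    (Real.rpow_pos_of_pos (by norm_num) _)) (by linarith [omegaR_pos n])

lemma near_lower (n : ℕ) {d C₁ γ : ℝ} (hd0 : 0 < d) (hdn1 : d < (n:ℝ)+1) (hC₁ : 1 ≤ C₁)
    {Γ : Set (Eucl n)} (hcl : IsClosed Γ) (hne : Γ.Nonempty) (hADR : IsADR n d C₁ Γ)
    {X : Eucl n} {r : ℝ} (hr : 0 < r) (hnear : infDist X Γ ≤ 8*r) :
    ENNReal.ofReal (lowC n d C₁ γ * r ^ (((n:ℝ)+1)-γ)) ≤ distWeightMeasure Γ γ (ball X r) := by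
  have hω := omegaR_pos n
  have htC := tubeC_pos n (d := d) hC₁
  obtain ⟨p, hpΓ, hpd⟩ := hcl.exists_infDist_eq_dist hne X
  have hXp : dist X p ≤ 8*r := hpd ▸ hnear
  set ε : ℝ := epsC n d C₁ with hεdef
  have hε0 : 0 < ε := epsC_pos n hC₁
  have hε1 : ε ≤ 1 := min_le_left _ _
  set T : Set (Eucl n) := {Y : Eucl n | infDist Y Γ ≤ ε*r} with hTdef
  have hball_sub : ball X r ⊆ ball p (9*r) := by
    intro Y hY
    have h1 : dist Y X < r := mem_ball.1 hY
    have := dist_triangle Y X p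
    exact mem_ball.2 (by linarith)
  -- the tube inside the ball is at most half of the ball volume
  have hkey : tubeC n d C₁ * (ε*r) ^ (((n:ℝ)+1)-d) * (9*r) ^ d ≤
      omegaR n * r^((n:ℝ)+1) / 2 := by
    have hεpow : ε ^ (((n:ℝ)+1)-d) ≤ omegaR n / (2 * tubeC n d C₁ * 9^d) := by
      have h1 : ε ≤ (omegaR n / (2 * tubeC n d C₁ * 9^d)) ^ (((n:ℝ)+1-d))⁻¹ :=
        min_le_right _ _
      have h2 : (0:ℝ) < omegaR n / (2 * tubeC n d C₁ * 9^d) :=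
        div_pos hω (mul_pos (mul_pos two_pos htC) (Real.rpow_pos_of_pos (by norm_num) d))
      calc ε ^ (((n:ℝ)+1)-d)
          ≤ ((omegaR n / (2 * tubeC n d C₁ * 9^d)) ^ (((n:ℝ)+1-d))⁻¹) ^ (((n:ℝ)+1)-d) :=
            Real.rpow_le_rpow hε0.le h1 (by linarith)
        _ = omegaR n / (2 * tubeC n d C₁ * 9^d) := by
            rw [← Real.rpow_mul h2.le,
              inv_mul_cancel₀ (by linarith : (0:ℝ) < (n:ℝ)+1-d).ne', Real.rpow_one]
    have e1 : (ε*r) ^ (((n:ℝ)+1)-d) = ε ^ (((n:ℝ)+1)-d) * r ^ (((n:ℝ)+1)-d) :=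
      Real.mul_rpow hε0.le hr.le
    have e2 : (9*r) ^ d = 9^d * r^d := Real.mul_rpow (by norm_num) hr.le
    have e3 : r ^ (((n:ℝ)+1)-d) * r ^ d = r ^ ((n:ℝ)+1) := by
      rw [← Real.rpow_add hr]; ring_nf
    have h9 : (0:ℝ) < (9:ℝ)^d := Real.rpow_pos_of_pos (by norm_num) _
    have hrp : (0:ℝ) < r ^ (((n:ℝ)+1)-d) := Real.rpow_pos_of_pos hr _
    have hrd : (0:ℝ) < r ^ d := Real.rpow_pos_of_pos hr _
    calc tubeC n d C₁ * (ε*r) ^ (((n:ℝ)+1)-d) * (9*r) ^ d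
        = (tubeC n d C₁ * 9^d * ε ^ (((n:ℝ)+1)-d)) * (r ^ (((n:ℝ)+1)-d) * r ^ d) := by
          rw [e1, e2]; ring
      _ ≤ (tubeC n d C₁ * 9^d * (omegaR n / (2 * tubeC n d C₁ * 9^d))) *
            (r ^ (((n:ℝ)+1)-d) * r ^ d) := by
          apply mul_le_mul_of_nonneg_right _ (by positivity)
          exact mul_le_mul_of_nonneg_left hεpow (by positivity)
      _ = omegaR n * r^((n:ℝ)+1) / 2 := by
          rw [e3]
          field_simp
  have htube : volume (T ∩ ball X r) ≤ ENNReal.ofReal (omegaR n * r^((n:ℝ)+1) / 2) := by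
    calc volume (T ∩ ball X r) ≤ volume (T ∩ ball p (9*r)) :=
          measure_mono (inter_subset_inter_right T hball_sub)
      _ ≤ ENNReal.ofReal (tubeC n d C₁ * (ε*r) ^ (((n:ℝ)+1)-d) * (9*r) ^ d) :=
          tube_bound n hd0 hdn1 hC₁ hcl hne hADR hpΓ (by positivity) (by nlinarith)
      _ ≤ ENNReal.ofReal (omegaR n * r^((n:ℝ)+1) / 2) := ENNReal.ofReal_le_ofReal hkey
  have hG : ENNReal.ofReal (omegaR n * r^((n:ℝ)+1) / 2) ≤ volume (ball X r \ T) := by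
    have hsplit : ball X r ⊆ (ball X r \ T) ∪ (T ∩ ball X r) := by
      intro Y hY
      by_cases hYT : Y ∈ T
      · exact Or.inr ⟨hYT, hY⟩
      · exact Or.inl ⟨hY, hYT⟩
    have h1 : ENNReal.ofReal (omegaR n * r^((n:ℝ)+1)) ≤
        volume (ball X r \ T) + ENNReal.ofReal (omegaR n * r^((n:ℝ)+1) / 2) := by
      rw [← vol_ball n X hr.le]
      exact le_trans (measure_mono hsplit)
        (le_trans (measure_union_le _ _) (add_le_add le_rfl htube))
    have h2 := tsub_le_iff_right.2 h1
    rwa [← ENNReal.ofReal_sub _ (by positivity),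
      show omegaR n * r^((n:ℝ)+1) - omegaR n * r^((n:ℝ)+1)/2 = omegaR n * r^((n:ℝ)+1)/2
        by ring] at h2
  have hwlow : ∀ Y ∈ ball X r \ T, min (ε^(-γ)) ((9:ℝ)^(-γ)) * r^(-γ) ≤ infDist Y Γ ^ (-γ) := by
    intro Y hY
    have h1 : ε*r < infDist Y Γ := not_le.1 hY.2
    have h2 : infDist Y Γ ≤ 9*r := by
      have := infDist_le_dist_of_mem hpΓ (x := Y)
      have h3 : dist Y p < 9*r := mem_ball.1 (hball_sub hY.1)
      linarith
    have hb := (rpow_bounds (γ := γ) (by positivity : (0:ℝ) < ε*r) h1.le h2).1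
    calc min (ε^(-γ)) ((9:ℝ)^(-γ)) * r^(-γ)
        = min (ε^(-γ) * r^(-γ)) ((9:ℝ)^(-γ) * r^(-γ)) :=
          min_mul_of_nonneg _ _ (Real.rpow_nonneg hr.le _)
      _ = min ((ε*r)^(-γ)) ((9*r)^(-γ)) := by
          rw [← Real.mul_rpow hε0.le hr.le, ← Real.mul_rpow (by norm_num) hr.le]
      _ ≤ infDist Y Γ ^ (-γ) := hb
  calc ENNReal.ofReal (lowC n d C₁ γ * r ^ (((n:ℝ)+1)-γ))
      = ENNReal.ofReal (min (ε^(-γ)) ((9:ℝ)^(-γ)) * r^(-γ)) *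
          ENNReal.ofReal (omegaR n * r^((n:ℝ)+1) / 2) := by
        rw [← ENNReal.ofReal_mul (mul_nonneg
          (le_min (Real.rpow_nonneg hε0.le _) (Real.rpow_nonneg (by norm_num) _))
          (Real.rpow_nonneg hr.le _))]
        congr 1
        unfold lowC
        rw [show (((n:ℝ)+1)-γ) = (-γ) + ((n:ℝ)+1) by ring, Real.rpow_add hr (-γ) ((n:ℝ)+1)]
        ring
    _ ≤ ENNReal.ofReal (min (ε^(-γ)) ((9:ℝ)^(-γ)) * r^(-γ)) * volume (ball X r \ T) :=
        mul_le_mul' le_rfl hG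
    _ ≤ distWeightMeasure Γ γ (ball X r \ T) := dwm_ge_const Γ γ hwlow
    _ ≤ distWeightMeasure Γ γ (ball X r) := dwm_mono Γ γ diff_subset

lemma upC_pos (n : ℕ) {d C₁ γ : ℝ} (hC₁ : 1 ≤ C₁) (hγ2 : γ < ((n:ℝ)+1)-d) :
    0 < upC n d C₁ γ := by
  have hθ1 : (2:ℝ)^(-(((n:ℝ)+1)-d-γ)) < 1 :=
    Real.rpow_lt_one_of_one_lt_of_neg (by norm_num) (by linarith)
  have h2γ : (0:ℝ) < (2:ℝ)^γ := Real.rpow_pos_of_pos (by norm_num) _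
  have htC := tubeC_pos n (d := d) hC₁
  have hinv : (0:ℝ) < (1 - (2:ℝ)^(-(((n:ℝ)+1)-d-γ)))⁻¹ := inv_pos.2 (by linarith)
  have := omegaR_pos n
  unfold upC
  positivity

def m1C (γ : ℝ) : ℝ := min (((1:ℝ)/2)^(-γ)) (((3:ℝ)/2)^(-γ))
def M1C (γ : ℝ) : ℝ := max (((1:ℝ)/2)^(-γ)) (((3:ℝ)/2)^(-γ))

lemma m1C_pos (γ : ℝ) : 0 < m1C γ :=
  lt_min (Real.rpow_pos_of_pos (by norm_num) _) (Real.rpow_pos_of_pos (by norm_num) _)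
lemma M1C_pos (γ : ℝ) : 0 < M1C γ :=
  lt_of_lt_of_le (Real.rpow_pos_of_pos (by norm_num) _) (le_max_left _ _)

lemma far_bounds (n : ℕ) (γ : ℝ) {Γ : Set (Eucl n)} (hcl : IsClosed Γ) (hne : Γ.Nonempty)
    {X : Eucl n} {r : ℝ} (hr : 0 < r) (hfar : 2*r < infDist X Γ) :
    ENNReal.ofReal (m1C γ * omegaR n * r^((n:ℝ)+1) * infDist X Γ ^ (-γ)) ≤
        distWeightMeasure Γ γ (ball X r) ∧
      distWeightMeasure Γ γ (ball X r) ≤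
        ENNReal.ofReal (M1C γ * omegaR n * r^((n:ℝ)+1) * infDist X Γ ^ (-γ)) := by
  have hω := omegaR_pos n
  set D : ℝ := infDist X Γ with hDdef
  have hD0 : 0 < D := lt_trans (by linarith) hfar
  have hDY : ∀ Y ∈ ball X r, D/2 ≤ infDist Y Γ ∧ infDist Y Γ ≤ 3*D/2 := by
    intro Y hY
    have h1 : dist Y X < r := mem_ball.1 hY
    have h2 : infDist X Γ ≤ infDist Y Γ + dist X Y := infDist_le_infDist_add_dist
    have h3 : infDist Y Γ ≤ infDist X Γ + dist Y X := infDist_le_infDist_add_dist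
    rw [dist_comm X Y] at h2
    constructor <;> [skip; skip] <;> simp only [← hDdef] at * <;> linarith
  have hmin : m1C γ * D^(-γ) = min ((D/2)^(-γ)) ((3*D/2)^(-γ)) := by
    unfold m1C
    rw [min_mul_of_nonneg _ _ (Real.rpow_nonneg hD0.le _),
      ← Real.mul_rpow (by norm_num) hD0.le, ← Real.mul_rpow (by norm_num) hD0.le,
      show (1/2:ℝ)*D = D/2 by ring, show (3/2:ℝ)*D = 3*D/2 by ring]
  have hmax : M1C γ * D^(-γ) = max ((D/2)^(-γ)) ((3*D/2)^(-γ)) := by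
    unfold M1C
    rw [max_mul_of_nonneg _ _ (Real.rpow_nonneg hD0.le _),
      ← Real.mul_rpow (by norm_num) hD0.le, ← Real.mul_rpow (by norm_num) hD0.le,
      show (1/2:ℝ)*D = D/2 by ring, show (3/2:ℝ)*D = 3*D/2 by ring]
  constructor
  · calc ENNReal.ofReal (m1C γ * omegaR n * r^((n:ℝ)+1) * D ^ (-γ))
        = ENNReal.ofReal (m1C γ * D^(-γ)) * ENNReal.ofReal (omegaR n * r^((n:ℝ)+1)) := by
          rw [← ENNReal.ofReal_mul (mul_nonneg (m1C_pos γ).le (Real.rpow_nonneg hD0.le _))]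
          congr 1
          ring
      _ = ENNReal.ofReal (m1C γ * D^(-γ)) * volume (ball X r) := by rw [vol_ball n X hr.le]
      _ ≤ distWeightMeasure Γ γ (ball X r) := by
          apply dwm_ge_const
          intro Y hY
          rw [hmin]
          exact (rpow_bounds (γ := γ) (by linarith) (hDY Y hY).1 (hDY Y hY).2).1
  · calc distWeightMeasure Γ γ (ball X r)
        ≤ ENNReal.ofReal (M1C γ * D^(-γ)) * volume (ball X r) := by
          apply dwm_le_const
          intro Y hY
          rw [hmax]
          exact (rpow_bounds (γ := γ) (by linarith) (hDY Y hY).1 (hDY Y hY).2).2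
      _ = ENNReal.ofReal (M1C γ * D^(-γ)) * ENNReal.ofReal (omegaR n * r^((n:ℝ)+1)) := by
          rw [vol_ball n X hr.le]
      _ = ENNReal.ofReal (M1C γ * omegaR n * r^((n:ℝ)+1) * D ^ (-γ)) := by
          rw [← ENNReal.ofReal_mul (mul_nonneg (M1C_pos γ).le (Real.rpow_nonneg hD0.le _))]
          congr 1
          ring

lemma ratio_le {a b : ℝ≥0∞} {u v t : ℝ} (hv : 0 < v) (ht : 0 ≤ t) (hu : 0 ≤ u)
    (h1 : a ≤ ENNReal.ofReal (u * t)) (h2 : ENNReal.ofReal (v * t) ≤ b) :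
    a ≤ ENNReal.ofReal (u/v) * b := by
  calc a ≤ ENNReal.ofReal (u*t) := h1
    _ = ENNReal.ofReal ((u/v) * (v*t)) := by rw [show (u/v)*(v*t) = u*t by field_simp]
    _ = ENNReal.ofReal (u/v) * ENNReal.ofReal (v*t) := ENNReal.ofReal_mul (by positivity)
    _ ≤ ENNReal.ofReal (u/v) * b := mul_le_mul' le_rfl h2

/-- for a `d`-ADR set `Γ ⊆ ℝ^{n+1}` (`0 < d < n`) and
`γ ∈ (n-d-1, n-d+1)`, the measure `m = dist(·,Γ)^{-γ} dY` satisfies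
`m(B(X,r)) ≃ r^{n+1} dist(X,Γ)^{-γ}` when `2r < dist(X,Γ)`, and `m` is doubling
on `ℝ^{n+1}`, with constants depending only on `n`, `d`, `γ` and the ADR
constant `C₁`. -/
theorem statement10 (n : ℕ) (hn : 1 ≤ n) (d : ℝ) (hd0 : 0 < d) (hdn : d < n)
    (γ : ℝ) (hγ1 : (n : ℝ) - d - 1 < γ) (hγ2 : γ < (n : ℝ) - d + 1)
    (C₁ : ℝ) (hC₁ : 1 ≤ C₁) :
    ∃ C : ℝ, 1 ≤ C ∧
      ∀ Γ : Set (EuclideanSpace ℝ (Fin (n + 1))), IsClosed Γ → Γ.Nonempty →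
        -- Γ is d-ADR with constant C₁
        (∀ x ∈ Γ, ∀ r : ℝ, 0 < r → ENNReal.ofReal r < EMetric.diam Γ →
          ENNReal.ofReal (C₁⁻¹ * r ^ d) ≤ μH[d] (Γ ∩ ball x r) ∧
            μH[d] (Γ ∩ ball x r) ≤ ENNReal.ofReal (C₁ * r ^ d)) →
        -- (i) m(B(X,r)) ≃ r^{n+1} dist(X,Γ)^{-γ} when 2r < dist(X,Γ)
        (∀ (X : EuclideanSpace ℝ (Fin (n + 1))) (r : ℝ), 0 < r →
          2 * r < Metric.infDist X Γ →
          ENNReal.ofReal (C⁻¹ * r ^ ((n : ℝ) + 1) * Metric.infDist X Γ ^ (-γ)) ≤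
              distWeightMeasure Γ γ (ball X r) ∧
            distWeightMeasure Γ γ (ball X r) ≤
              ENNReal.ofReal (C * r ^ ((n : ℝ) + 1) * Metric.infDist X Γ ^ (-γ))) ∧
        -- (ii) m is doubling on ℝ^{n+1}
        (∀ (X : EuclideanSpace ℝ (Fin (n + 1))) (r : ℝ), 0 < r →
          distWeightMeasure Γ γ (ball X (2 * r)) ≤
            ENNReal.ofReal C * distWeightMeasure Γ γ (ball X r)) := by
  have hω := omegaR_pos n
  have hdn1 : d < (n:ℝ)+1 := by linarith
  have hγ2' : γ < ((n:ℝ)+1)-d := by linarith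
  have hK1 : 0 < m1C γ * omegaR n := mul_pos (m1C_pos γ) hω
  have hK2 : 0 < M1C γ * omegaR n := mul_pos (M1C_pos γ) hω
  have hlow := lowC_pos n (d := d) (C₁ := C₁) γ hC₁
  have hup := upC_pos n (d := d) (C₁ := C₁) (γ := γ) hC₁ hγ2'
  set K3 : ℝ := upC n d C₁ γ * (10:ℝ)^(((n:ℝ)+1)-γ) with hK3def
  have hK3 : 0 < K3 := mul_pos hup (Real.rpow_pos_of_pos (by norm_num) _)
  set C : ℝ := max 1 (max (m1C γ * omegaR n)⁻¹ (max (M1C γ * omegaR n)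
    (max (M1C γ * omegaR n * 2^((n:ℝ)+1) / (m1C γ * omegaR n)) (K3 / lowC n d C₁ γ))))
    with hCdef
  have hC1 : (1:ℝ) ≤ C := le_max_left _ _
  refine ⟨C, hC1, fun Γ hcl hne hADR => ?_⟩
  have hADR' : IsADR n d C₁ Γ := hADR
  constructor
  · -- part (i)
    intro X r hr h2r
    have hD0 : 0 < infDist X Γ := lt_trans (by linarith) h2r
    obtain ⟨hfl, hfu⟩ := far_bounds n γ hcl hne hr h2r
    have hrD : (0:ℝ) ≤ r ^ ((n:ℝ)+1) * infDist X Γ ^ (-γ) :=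
      mul_nonneg (Real.rpow_nonneg hr.le _) (Real.rpow_nonneg hD0.le _)
    constructor
    · refine le_trans (ENNReal.ofReal_le_ofReal ?_) hfl
      have hinv : C⁻¹ ≤ m1C γ * omegaR n := by
        have h1 : (m1C γ * omegaR n)⁻¹ ≤ C := le_trans (le_max_left _ _) (le_max_right _ _)
        calc C⁻¹ ≤ ((m1C γ * omegaR n)⁻¹)⁻¹ := by
              exact inv_anti₀ (inv_pos.2 hK1) h1
          _ = m1C γ * omegaR n := inv_inv _
      calc C⁻¹ * r ^ ((n:ℝ)+1) * infDist X Γ ^ (-γ)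
          = C⁻¹ * (r ^ ((n:ℝ)+1) * infDist X Γ ^ (-γ)) := by ring
        _ ≤ (m1C γ * omegaR n) * (r ^ ((n:ℝ)+1) * infDist X Γ ^ (-γ)) :=
            mul_le_mul_of_nonneg_right hinv hrD
        _ = m1C γ * omegaR n * r ^ ((n:ℝ)+1) * infDist X Γ ^ (-γ) := by ring
    · refine le_trans hfu (ENNReal.ofReal_le_ofReal ?_)
      have h2 : M1C γ * omegaR n ≤ C :=
        le_trans (le_max_left _ _) (le_trans (le_max_right _ _) (le_max_right _ _))
      calc M1C γ * omegaR n * r ^ ((n:ℝ)+1) * infDist X Γ ^ (-γ)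
          = (M1C γ * omegaR n) * (r ^ ((n:ℝ)+1) * infDist X Γ ^ (-γ)) := by ring
        _ ≤ C * (r ^ ((n:ℝ)+1) * infDist X Γ ^ (-γ)) := mul_le_mul_of_nonneg_right h2 hrD
        _ = C * r ^ ((n:ℝ)+1) * infDist X Γ ^ (-γ) := by ring
  · -- part (ii)
    intro X r hr
    rcases le_or_gt (infDist X Γ) (8*r) with hnear | hfarc
    · -- near case
      obtain ⟨p, hpΓ, hpd⟩ := hcl.exists_infDist_eq_dist hne X
      have hXp : dist X p ≤ 8*r := hpd ▸ hnear
      have hsub : ball X (2*r) ⊆ ball p (10*r) := by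
        intro Y hY
        have h1 : dist Y X < 2*r := mem_ball.1 hY
        have := dist_triangle Y X p
        exact mem_ball.2 (by linarith)
      have hupb : distWeightMeasure Γ γ (ball X (2*r)) ≤
          ENNReal.ofReal (K3 * r ^ (((n:ℝ)+1)-γ)) := by
        refine le_trans (dwm_mono Γ γ hsub) (le_trans (near_upper n hd0 hdn1 hC₁ hγ2'
          hcl hne hADR' hpΓ (by linarith)) (le_of_eq ?_))
        rw [hK3def]
        congr 1
        rw [Real.mul_rpow (by norm_num : (0:ℝ) ≤ 10) hr.le]
        ring
      have hlowb := near_lower n (γ := γ) hd0 hdn1 hC₁ hcl hne hADR' hr hnear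
      have hrt : (0:ℝ) ≤ r ^ (((n:ℝ)+1)-γ) := Real.rpow_nonneg hr.le _
      refine le_trans (ratio_le hlow hrt hK3.le hupb hlowb) ?_
      refine mul_le_mul' (ENNReal.ofReal_le_ofReal ?_) le_rfl
      exact le_trans (le_max_right _ _) (le_trans (le_max_right _ _)
        (le_trans (le_max_right _ _) (le_max_right _ _)))
    · -- far case
      have h4r : 2*(2*r) < infDist X Γ := by linarith
      have h2r : 2*r < infDist X Γ := by linarith
      obtain ⟨-, hfu⟩ := far_bounds n γ hcl hne (by linarith : (0:ℝ) < 2*r) h4r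
      obtain ⟨hfl, -⟩ := far_bounds n γ hcl hne hr h2r
      have hD0 : (0:ℝ) < infDist X Γ := lt_trans (by linarith) h2r
      have ht : (0:ℝ) ≤ r ^ ((n:ℝ)+1) * infDist X Γ ^ (-γ) :=
        mul_nonneg (Real.rpow_nonneg hr.le _) (Real.rpow_nonneg hD0.le _)
      have hu' : distWeightMeasure Γ γ (ball X (2*r)) ≤
          ENNReal.ofReal ((M1C γ * omegaR n * 2^((n:ℝ)+1)) *
            (r ^ ((n:ℝ)+1) * infDist X Γ ^ (-γ))) := by
        refine le_trans hfu (le_of_eq ?_)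
        congr 1
        rw [Real.mul_rpow (by norm_num : (0:ℝ) ≤ 2) hr.le]
        ring
      have hl' : ENNReal.ofReal ((m1C γ * omegaR n) *
          (r ^ ((n:ℝ)+1) * infDist X Γ ^ (-γ))) ≤ distWeightMeasure Γ γ (ball X r) := by
        refine le_trans (le_of_eq ?_) hfl
        congr 1
        ring
      refine le_trans (ratio_le hK1 ht (by positivity) hu' hl') ?_
      refine mul_le_mul' (ENNReal.ofReal_le_ofReal ?_) le_rfl
      exact le_trans (le_max_left _ _) (le_trans (le_max_right _ _)
        (le_trans (le_max_right _ _) (le_max_right _ _)))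
end
end
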